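/- arXiv:1007.3021 — 6 statements merged into one kernel-verified Lean document; each statement's English description precedes it below -/
import Mathlib

section
/- Let S be a language over a finite alphabet Σ, and let Δ = {(x,n) ∈ Σ* × ℕ : |x| ≤ n}. Then S is in REG/n if and only if there exists an equivalence relation ≡_S on Δ such that (a) the quotient Δ/≡_S has only finitely many equivalence classes, and (b) for every n ∈ ℕ and all strings x,y ∈ Σ* with |x| = |y| ≤ n: (x,n) ≡_S (y,n) if and only if for every string z with |xz| = n, xz ∈ S ↔ yz ∈ S. -/
open scoped BigOperators

/-- A rational one-way probabilistic finite automaton over alphabet `Λ`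
(with endmarker matrices `matC` for ¢ and `matD` for $). -/
structure PFA (Λ : Type) where
  Q : Type
  fin : Fintype Q
  dec : DecidableEq Q
  start : Q
  final : Finset Q
  matC : Matrix Q Q ℚ
  matD : Matrix Q Q ℚ
  mat : Λ → Matrix Q Q ℚ
  nonnegC : ∀ i j, 0 ≤ matC i j
  nonnegD : ∀ i j, 0 ≤ matD i j
  nonnegMat : ∀ σ i j, 0 ≤ mat σ i j
  rowC : ∀ i, ∑ j ∈ fin.elems, matC i j = 1
  rowD : ∀ i, ∑ j ∈ fin.elems, matD i j = 1
  rowMat : ∀ σ i, ∑ j ∈ fin.elems, mat σ i j = 1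

/-- Acceptance probability of a 1pfa on an input string. -/
def PFA.accProb {Λ : Type} (M : PFA Λ) (x : List Λ) : ℚ :=
  letI := M.fin
  letI := M.dec
  ∑ q ∈ M.final,
    (Matrix.vecMul
      (x.foldl (fun v σ => Matrix.vecMul v (M.mat σ))
        (Matrix.vecMul (Pi.single M.start 1) M.matC))
      M.matD) q

/-- `D` is a probability distribution on `Γ^n`. -/
def IsDist {Γ : Type} [Fintype Γ] {n : ℕ} (D : List.Vector Γ n → ℝ) : Prop :=
  (∀ y, 0 ≤ D y) ∧ ∑ y, D y = 1

open Classical in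
/-- Probability, under randomized advice `D`, that the track string `[x//y]` lies in `L`. -/
noncomputable def randAccProb {Alp Γ : Type} [Fintype Γ] (L : Set (List (Alp × Γ)))
    {n : ℕ} (D : List.Vector Γ n → ℝ) (x : List Alp) : ℝ :=
  ∑ y : List.Vector Γ n, if x.zip y.toList ∈ L then D y else 0

/-- `S ∈ REG/n`. -/
def InREGn {Alp : Type} (S : Set (List Alp)) : Prop :=
  ∃ (Γ : Type) (_ : Fintype Γ) (h : ℕ → List Γ), (∀ n, (h n).length = n) ∧
    ∃ (Q : Type) (_ : Fintype Q) (M : DFA (Alp × Γ) Q),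
      ∀ x : List Alp, x ∈ S ↔ x.zip (h x.length) ∈ M.accepts

/-- `S ∈ REG/Rn` (bounded error, randomized advice). -/
def InREGRn {Alp : Type} (S : Set (List Alp)) : Prop :=
  ∃ (Γ : Type) (iΓ : Fintype Γ),
    letI := iΓ
    ∃ (Q : Type) (_ : Fintype Q) (M : DFA (Alp × Γ) Q) (ε : ℝ),
      0 ≤ ε ∧ ε < 1 / 2 ∧
        ∃ D : (n : ℕ) → List.Vector Γ n → ℝ, (∀ n, IsDist (D n)) ∧
          ∀ (n : ℕ) (x : List Alp), x.length = n →
            (x ∈ S → 1 - ε ≤ randAccProb M.accepts (D n) x) ∧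
            (x ∉ S → randAccProb M.accepts (D n) x ≤ ε)

/-- `S ∈ CFL/n`. -/
def InCFLn {Alp : Type} (S : Set (List Alp)) : Prop :=
  ∃ (Γ : Type) (_ : Fintype Γ) (h : ℕ → List Γ), (∀ n, (h n).length = n) ∧
    ∃ L : Language (Alp × Γ), L.IsContextFree ∧
      ∀ x : List Alp, x ∈ S ↔ x.zip (h x.length) ∈ L

/-- `S ∈ CFL/Rn` (bounded error, randomized advice). -/
def InCFLRn {Alp : Type} (S : Set (List Alp)) : Prop :=
  ∃ (Γ : Type) (iΓ : Fintype Γ),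
    letI := iΓ
    ∃ (L : Language (Alp × Γ)), L.IsContextFree ∧
      ∃ (ε : ℝ), 0 ≤ ε ∧ ε < 1 / 2 ∧
        ∃ D : (n : ℕ) → List.Vector Γ n → ℝ, (∀ n, IsDist (D n)) ∧
          ∀ (n : ℕ) (x : List Alp), x.length = n →
            (x ∈ S → 1 - ε ≤ randAccProb L (D n) x) ∧
            (x ∉ S → randAccProb L (D n) x ≤ ε)

/-- `A ∈ 1C=LIN/lin` via the paper's 1pfa characterization. -/
def InOneCeqLin {Alp : Type} (A : Set (List Alp)) : Prop :=
  ∃ (Γ : Type) (_ : Fintype Γ) (h : ℕ → List Γ), (∀ n, (h n).length = n) ∧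
    ∃ M : PFA (Alp × Γ),
      ∀ x : List Alp, x ∈ A ↔ M.accProb (x.zip (h x.length)) = 1 / 2

/-- `A ∈ 1PLIN/lin` via the paper's 1pfa characterization. -/
def InOnePLin {Alp : Type} (A : Set (List Alp)) : Prop :=
  ∃ (Γ : Type) (_ : Fintype Γ) (h : ℕ → List Γ), (∀ n, (h n).length = n) ∧
    ∃ M : PFA (Alp × Γ),
      ∀ x : List Alp, x ∈ A ↔ 1 / 2 < M.accProb (x.zip (h x.length))

open Classical in
/-- `(A, μ) ∈ aver-REG/n`. -/
def InAverREGn {Alp : Type} [Fintype Alp] (A : Set (List Alp))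
    (μ : (n : ℕ) → List.Vector Alp n → ℝ) : Prop :=
  ∃ (Γ : Type) (_ : Fintype Γ) (h : ℕ → List Γ), (∀ n, (h n).length = n) ∧
    ∃ (Q : Type) (_ : Fintype Q) (M : DFA (Alp × Γ) Q) (ε : ℝ),
      0 ≤ ε ∧ ε < 1 / 2 ∧
        ∀ n : ℕ, 1 - ε ≤ ∑ x : List.Vector Alp n,
          if (x.toList.zip (h n) ∈ M.accepts ↔ x.toList ∈ A) then μ n x else 0

/-- The language `Dup = {ww : w ∈ {0,1}*}`. -/
def Dup : Set (List Bool) := {z | ∃ w : List Bool, z = w ++ w}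

/-- The marked palindrome language `Pal_# = {w#w^R}` over the alphabet
`Option Bool` (with `none` playing the role of the marker `#`). -/
def PalHash : Set (List (Option Bool)) :=
  {z | ∃ w : List Bool, z = w.map some ++ none :: (w.reverse.map some)}

/-- Inner product (number of common `true` positions) of two bit strings. -/
def innerProd (u v : List Bool) : ℕ :=
  ((u.zip v).filter fun p => p.1 && p.2).length

/-- The language `IP_* = {axy : a ∈ {λ,0,1}, |x| = |y|, x^R ⊙ y ≡ 0 (mod 2)}`. -/
def IPstar : Language Bool :=
  {z | ∃ a x y : List Bool, (a = [] ∨ a = [false] ∨ a = [true]) ∧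
    z = a ++ x ++ y ∧ x.length = y.length ∧ innerProd x.reverse y % 2 = 0}

/-- A negligible function. -/
def Negligible (f : ℕ → ℝ) : Prop :=
  ∀ k : ℕ, 0 < k → ∃ N : ℕ, ∀ n ≥ N, f n ≤ 1 / (n : ℝ) ^ k

/-- `L` is `REG/n`-pseudorandom. -/
def RegPseudorandom {Alp : Type} [Fintype Alp] (L : Set (List Alp)) : Prop :=
  ∀ B : Set (List Alp), InREGn B →
    Negligible fun n =>
      |(((symmDiff B L) ∩ {x | x.length = n}).ncard : ℝ) /
        (Fintype.card Alp : ℝ) ^ n - 1 / 2|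

namespace Stmt0Aux
open Classical

abbrev TrkD (Alp : Type) := {p : List Alp × ℕ // p.1.length ≤ p.2}

theorem zip_take_len {α β : Type*} : ∀ (u : List α) (w : List β),
    u.zip (w.take u.length) = u.zip w
  | [], w => by simp
  | a :: u, [] => by simp
  | a :: u, b :: w => by
      simp only [List.length_cons, List.take_succ_cons, List.zip_cons_cons,
        zip_take_len u w]

theorem zip_split {α β : Type*} (u z : List α) (w : List β)
    (hw : u.length ≤ w.length) :
    (u ++ z).zip w = u.zip w ++ z.zip (w.drop u.length) := by
  conv_lhs => rw [← List.take_append_drop u.length w]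
  rw [List.zip_append (by rw [List.length_take]; omega), zip_take_len]

/-- A canonical representative string of a class `q`, among strings of length `i`
paired with `n`. -/
noncomputable def pick {Alp : Type} (s : Setoid (TrkD Alp)) (n i : ℕ)
    (q : Quotient s) : List Alp :=
  if hq : ∃ x : List Alp, x.length = i ∧ ∃ hle : x.length ≤ n,
      Quotient.mk s ⟨(x, n), hle⟩ = q then hq.choose else []

theorem pick_spec {Alp : Type} (s : Setoid (TrkD Alp)) (n i : ℕ) (q : Quotient s)
    (hq : ∃ x : List Alp, x.length = i ∧ ∃ hle : x.length ≤ n,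
      Quotient.mk s ⟨(x, n), hle⟩ = q) :
    (pick s n i q).length = i ∧ ∃ hle : (pick s n i q).length ≤ n,
      Quotient.mk s ⟨(pick s n i q, n), hle⟩ = q := by
  unfold pick
  rw [dif_pos hq]
  exact ⟨hq.choose_spec.1, hq.choose_spec.2⟩

/-- The advice symbol at position `i` of the advice string for length `n`. -/
noncomputable def gsym {Alp : Type} (S : Set (List Alp)) (s : Setoid (TrkD Alp))
    (n i : ℕ) : Option (Quotient s) → Alp → Quotient s × Bool
  | none, a =>
      if hin : i + 1 ≤ n then
        (Quotient.mk s ⟨([a], n), by simp only [List.length_singleton]; omega⟩,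
          if i + 1 = n ∧ [a] ∈ S then true else false)
      else (Quotient.mk s ⟨([], 0), by simp⟩, false)
  | some q, a =>
      if h : i + 1 ≤ n ∧ ∃ x : List Alp, x.length = i ∧ ∃ hle : x.length ≤ n,
          Quotient.mk s ⟨(x, n), hle⟩ = q then
        (Quotient.mk s ⟨(pick s n i q ++ [a], n), by
            have h1 := (pick_spec s n i q h.2).1
            simp only [List.length_append, List.length_singleton, h1]
            omega⟩,
          if i + 1 = n ∧ (pick s n i q ++ [a]) ∈ S then true else false)
      else (q, false)

theorem gsym_none {Alp : Type} (S : Set (List Alp)) (s : Setoid (TrkD Alp))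
    (n : ℕ) (a : Alp) (hn : 1 ≤ n) (h1 : ([a] : List Alp).length ≤ n) :
    gsym S s n 0 none a
      = (Quotient.mk s ⟨([a], n), h1⟩, if 0 + 1 = n ∧ [a] ∈ S then true else false) := by
  simp only [gsym]
  rw [dif_pos (by omega : 0 + 1 ≤ n)]

theorem gsym_some {Alp : Type} (S : Set (List Alp)) (s : Setoid (TrkD Alp))
    (hs : ∀ (n : ℕ) (x y : List Alp) (hx : x.length ≤ n) (hy : y.length ≤ n),
          x.length = y.length →
          (s.r ⟨(x, n), hx⟩ ⟨(y, n), hy⟩ ↔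
            ∀ z : List Alp, (x ++ z).length = n → ((x ++ z) ∈ S ↔ (y ++ z) ∈ S)))
    (n i : ℕ) (a : Alp) (x : List Alp) (hx : x.length ≤ n) (hxi : x.length = i)
    (hin : i + 1 ≤ n) (hxa : (x ++ [a]).length ≤ n) :
    gsym S s n i (some (Quotient.mk s ⟨(x, n), hx⟩)) a
      = (Quotient.mk s ⟨(x ++ [a], n), hxa⟩,
          if i + 1 = n ∧ (x ++ [a]) ∈ S then true else false) := by
  have hq : ∃ y : List Alp, y.length = i ∧ ∃ hle : y.length ≤ n,
      Quotient.mk s ⟨(y, n), hle⟩ = Quotient.mk s ⟨(x, n), hx⟩ :=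
    ⟨x, hxi, hx, rfl⟩
  obtain ⟨hul, hule, humk⟩ := pick_spec s n i (Quotient.mk s ⟨(x, n), hx⟩) hq
  have hr : s.r ⟨(pick s n i (Quotient.mk s ⟨(x, n), hx⟩), n), hule⟩ ⟨(x, n), hx⟩ :=
    Quotient.exact humk
  have hbeh := (hs n _ x hule hx (hul.trans hxi.symm)).mp hr
  simp only [gsym]
  rw [dif_pos ⟨hin, hq⟩]
  refine Prod.ext ?_ ?_
  · show Quotient.mk s _ = Quotient.mk s _
    apply Quotient.sound
    show s.r ⟨(_, n), _⟩ ⟨(_, n), _⟩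
    refine (hs n _ (x ++ [a])
        (by simp only [List.length_append, List.length_singleton, hul]; omega) hxa
        (by simp only [List.length_append, List.length_singleton, hul, hxi])).mpr ?_
    intro z hz
    have hz' : (pick s n i (Quotient.mk s ⟨(x, n), hx⟩) ++ ([a] ++ z)).length = n := by
      simpa only [List.append_assoc] using hz
    simpa only [List.append_assoc] using hbeh ([a] ++ z) hz'
  · show (if _ then _ else _) = (if _ then _ else _)
    refine if_congr (and_congr_right fun hi1n => ?_) rfl rfl
    exact hbeh [a]
      (by simp only [List.length_append, List.length_singleton, hul]; omega)

noncomputable def advice {Alp : Type} (S : Set (List Alp)) (s : Setoid (TrkD Alp))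
    (n : ℕ) : List (Option (Quotient s) → Alp → Quotient s × Bool) :=
  (List.range n).map (gsym S s n)

def advDFA {Alp : Type} (S : Set (List Alp)) (s : Setoid (TrkD Alp)) :
    DFA (Alp × (Option (Quotient s) → Alp → Quotient s × Bool))
      (Option (Quotient s × Bool)) where
  step st p := some (p.2 (st.map Prod.fst) p.1)
  start := none
  accept := {st | match st with | none => [] ∈ S | some qb => qb.2 = true}

theorem advDFA_eval {Alp : Type} (S : Set (List Alp)) (s : Setoid (TrkD Alp))
    (hs : ∀ (n : ℕ) (x y : List Alp) (hx : x.length ≤ n) (hy : y.length ≤ n),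
          x.length = y.length →
          (s.r ⟨(x, n), hx⟩ ⟨(y, n), hy⟩ ↔
            ∀ z : List Alp, (x ++ z).length = n → ((x ++ z) ∈ S ↔ (y ++ z) ∈ S)))
    (n : ℕ) (x : List Alp) :
    ∀ (hx : x.length ≤ n) (_ : x ≠ []),
    (advDFA S s).eval (x.zip (advice S s n))
      = some (Quotient.mk s ⟨(x, n), hx⟩,
          if x.length = n ∧ x ∈ S then true else false) := by
  induction x using List.reverseRecOn with
  | nil => intro _ h; exact absurd rfl h
  | append_singleton y a ih =>
    intro hx _
    have hyn : y.length ≤ n := by simp only [List.length_append] at hx; omega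
    have hin : y.length + 1 ≤ n := by
      simp only [List.length_append, List.length_singleton] at hx; omega
    have hadv : (advice S s n).length = n := by simp [advice]
    have hsplit : (y ++ [a]).zip (advice S s n)
        = y.zip (advice S s n) ++ [(a, gsym S s n y.length)] := by
      rw [zip_split y [a] _ (by omega)]
      congr 1
      rw [List.drop_eq_getElem_cons (by omega)]
      simp [advice]
    rw [hsplit, DFA.eval_append_singleton]
    rcases eq_or_ne y [] with hy | hy
    · subst hy
      show some (gsym S s n 0 (((advDFA S s).eval []).map Prod.fst) a) = _
      have : ((advDFA S s).eval ([] : List _)).map Prod.fst = none := rfl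
      rw [this, gsym_none S s n a (by omega) (by simpa using hin)]
      simp only [List.nil_append, List.length_singleton]
    · rw [ih hyn hy]
      show some (gsym S s n y.length (some (Quotient.mk s ⟨(y, n), hyn⟩)) a) = _
      rw [gsym_some S s hs n y.length a y hyn rfl hin hx]
      simp only [List.length_append, List.length_singleton]



def behSetoid {Alp : Type} (S : Set (List Alp)) : Setoid (TrkD Alp) where
  r p q := p.1.2 = q.1.2 ∧ p.1.1.length = q.1.1.length ∧
    ∀ z, (p.1.1 ++ z).length = p.1.2 → ((p.1.1 ++ z) ∈ S ↔ (q.1.1 ++ z) ∈ S)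
  iseqv := by
    constructor
    · exact fun p => ⟨rfl, rfl, fun z _ => Iff.rfl⟩
    · rintro p q ⟨h1, h2, h3⟩
      refine ⟨h1.symm, h2.symm, fun z hz => (h3 z ?_).symm⟩
      simp only [List.length_append] at hz ⊢
      omega
    · rintro p q r ⟨h1, h2, h3⟩ ⟨h4, h5, h6⟩
      refine ⟨h1.trans h4, h2.trans h5, fun z hz => (h3 z hz).trans (h6 z ?_)⟩
      simp only [List.length_append] at hz ⊢
      omega

noncomputable def labelOf {Alp Γ Q : Type} (S : Set (List Alp)) (h : ℕ → List Γ)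
    (M : DFA (Alp × Γ) Q) (p : TrkD Alp) : Q :=
  M.eval (((Quotient.mk (behSetoid S) p).out).1.1.zip
    (h ((Quotient.mk (behSetoid S) p).out).1.2))



theorem key_forward {Alp Γ Q : Type} (S : Set (List Alp)) (h : ℕ → List Γ)
    (hlen : ∀ n, (h n).length = n) (M : DFA (Alp × Γ) Q)
    (hM : ∀ x : List Alp, x ∈ S ↔ x.zip (h x.length) ∈ M.accepts)
    {n : ℕ} {u v : List Alp} (hu : u.length ≤ n) (hv : v.length ≤ n)
    (huv : u.length = v.length)
    (hst : M.eval (u.zip (h n)) = M.eval (v.zip (h n))) :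
    ∀ z, (u ++ z).length = n → ((u ++ z) ∈ S ↔ (v ++ z) ∈ S) := by
  intro z hz
  have hvz : (v ++ z).length = n := by
    simp only [List.length_append] at hz ⊢; omega
  rw [hM (u ++ z), hM (v ++ z), hz, hvz, DFA.mem_accepts, DFA.mem_accepts,
    zip_split u z (h n) (by rw [hlen]; omega),
    zip_split v z (h n) (by rw [hlen]; omega)]
  show M.evalFrom M.start _ ∈ M.accept ↔ M.evalFrom M.start _ ∈ M.accept
  rw [DFA.evalFrom_of_append, DFA.evalFrom_of_append]
  show M.evalFrom (M.eval _) _ ∈ M.accept ↔ M.evalFrom (M.eval _) _ ∈ M.accept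
  rw [hst, huv]

theorem forward_dir {Alp : Type} (S : Set (List Alp)) {Γ Q : Type} [Fintype Q]
    (h : ℕ → List Γ) (hlen : ∀ n, (h n).length = n) (M : DFA (Alp × Γ) Q)
    (hM : ∀ x : List Alp, x ∈ S ↔ x.zip (h x.length) ∈ M.accepts) :
    ∃ s : Setoid (TrkD Alp),
        Finite (Quotient s) ∧
        ∀ (n : ℕ) (x y : List Alp) (hx : x.length ≤ n) (hy : y.length ≤ n),
          x.length = y.length →
          (s.r ⟨(x, n), hx⟩ ⟨(y, n), hy⟩ ↔
            ∀ z : List Alp, (x ++ z).length = n → ((x ++ z) ∈ S ↔ (y ++ z) ∈ S)) := by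
  refine ⟨Setoid.ker (labelOf S h M), ?_, ?_⟩
  · exact Finite.of_injective
      (Quotient.lift (labelOf S h M) fun a b hab => hab)
      (fun a b => Quotient.inductionOn₂ a b fun p q hpq => Quotient.sound hpq)
  · intro n x y hx hy hxy
    set t := behSetoid S with ht
    set px : TrkD Alp := ⟨(x, n), hx⟩ with hpx
    set py : TrkD Alp := ⟨(y, n), hy⟩ with hpy
    show labelOf S h M px = labelOf S h M py ↔ _
    constructor
    · intro heq z hz
      have h1 : t.r (Quotient.mk t px).out px := Quotient.mk_out px
      have h2 : t.r (Quotient.mk t py).out py := Quotient.mk_out py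
      obtain ⟨hn1, hl1, hb1⟩ := h1
      obtain ⟨hn2, hl2, hb2⟩ := h2
      have hn1' : (Quotient.mk t px).out.1.2 = n := hn1
      have hl1' : (Quotient.mk t px).out.1.1.length = x.length := hl1
      have hn2' : (Quotient.mk t py).out.1.2 = n := hn2
      have hl2' : (Quotient.mk t py).out.1.1.length = y.length := hl2
      have hle1 : (Quotient.mk t px).out.1.1.length ≤ (Quotient.mk t px).out.1.2 :=
        (Quotient.mk t px).out.2
      have hle2 : (Quotient.mk t py).out.1.1.length ≤ (Quotient.mk t py).out.1.2 :=
        (Quotient.mk t py).out.2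
      have hzn : (x ++ z).length = n := hz
      rw [List.length_append] at hzn
      -- rewrite advice argument using hn1, hn2
      unfold labelOf at heq
      rw [← ht] at heq
      rw [hn1', hn2'] at heq
      have hbeh := key_forward S h hlen M hM
        (u := (Quotient.mk t px).out.1.1) (v := (Quotient.mk t py).out.1.1)
        (by omega : (Quotient.mk t px).out.1.1.length ≤ (n:ℕ)) (by omega)
        (by rw [hl1', hl2']; exact hxy) heq
      have hz1 : ((Quotient.mk t px).out.1.1 ++ z).length = n := by
        rw [List.length_append]; omega
      have hz2 : ((Quotient.mk t py).out.1.1 ++ z).length = n := by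
        rw [List.length_append]; omega
      calc (x ++ z) ∈ S ↔ ((Quotient.mk t px).out.1.1 ++ z) ∈ S := by
              have := hb1 z (by rw [hn1']; exact hz1)
              simpa using this.symm
        _ ↔ ((Quotient.mk t py).out.1.1 ++ z) ∈ S := hbeh z hz1
        _ ↔ (y ++ z) ∈ S := by
              have := hb2 z (by rw [hn2']; exact hz2)
              simpa using this
    · intro hbeh
      have hmk : Quotient.mk t px = Quotient.mk t py :=
        Quotient.sound (⟨rfl, hxy, hbeh⟩ : t.r px py)
      unfold labelOf
      rw [← ht, hmk]


end Stmt0Aux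

theorem stmt0 (Alp : Type) [Fintype Alp] (S : Set (List Alp)) :
    InREGn S ↔
      ∃ s : Setoid {p : List Alp × ℕ // p.1.length ≤ p.2},
        Finite (Quotient s) ∧
        ∀ (n : ℕ) (x y : List Alp) (hx : x.length ≤ n) (hy : y.length ≤ n),
          x.length = y.length →
          (s.r ⟨(x, n), hx⟩ ⟨(y, n), hy⟩ ↔
            ∀ z : List Alp, (x ++ z).length = n → ((x ++ z) ∈ S ↔ (y ++ z) ∈ S)) := by
  constructor
  · rintro ⟨Γ, iΓ, h, hlen, Q, iQ, M, hM⟩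
    exact Stmt0Aux.forward_dir S h hlen M hM
  · rintro ⟨s, hfin, hs⟩
    classical
    letI := Fintype.ofFinite (Quotient s)
    refine ⟨Option (Quotient s) → Alp → Quotient s × Bool, inferInstance,
      Stmt0Aux.advice S s, fun n => by simp [Stmt0Aux.advice],
      Option (Quotient s × Bool), inferInstance, Stmt0Aux.advDFA S s, ?_⟩
    intro x
    rcases eq_or_ne x [] with hx | hx
    · subst hx
      exact Iff.rfl
    · rw [DFA.mem_accepts, Stmt0Aux.advDFA_eval S s hs x.length x le_rfl hx]
      show x ∈ S ↔ (if x.length = x.length ∧ x ∈ S then true else false) = true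
      by_cases hxs : x ∈ S <;> simp [hxs]
end

section
/- Let A be a language over a finite alphabet Σ that belongs to 1C=LIN/lin. Then there exists a positive integer m such that for all n ≥ 1, all ℓ ≤ n−1, and every z ∈ Σ^ℓ, letting A_{n,z} = {w ∈ Σ^{n−ℓ} : wz ∈ A}, there exists a subset S ⊆ A_{n,z} with |S| ≤ m such that for every y ∈ Σ^ℓ: if wy ∈ A for every w ∈ S, then xy ∈ A for every x ∈ A_{n,z}. -/
open scoped BigOperators

private lemma aux_foldl_vecMul {Q Λ : Type} [Fintype Q] [DecidableEq Q] (f : Λ → Matrix Q Q ℚ) :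
    ∀ (l : List Λ) (v : Q → ℚ),
      l.foldl (fun v σ => Matrix.vecMul v (f σ)) v = Matrix.vecMul v (l.map f).prod := by
  intro l
  induction l with
  | nil => intro v; simp [Matrix.vecMul_one]
  | cons a t ih =>
    intro v
    simp only [List.foldl_cons, List.map_cons, List.prod_cons]
    rw [ih, Matrix.vecMul_vecMul]

private lemma aux_sum_vecMul {Q : Type} [Fintype Q] (v : Q → ℚ) (A : Matrix Q Q ℚ)
    (hA : ∀ i, ∑ j, A i j = 1) (hv : ∑ i, v i = 1) :
    ∑ j, Matrix.vecMul v A j = 1 := by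
  have : ∑ j, Matrix.vecMul v A j = ∑ i, v i * ∑ j, A i j := by
    simp only [Matrix.vecMul, dotProduct, Finset.mul_sum]
    exact Finset.sum_comm
  rw [this]
  simp only [hA, mul_one, hv]

private lemma aux_prod_rowsum {Q : Type} [Fintype Q] [DecidableEq Q] :
    ∀ (L : List (Matrix Q Q ℚ)), (∀ A ∈ L, ∀ i, ∑ j, A i j = 1) →
      ∀ i, ∑ j, L.prod i j = 1 := by
  intro L
  induction L with
  | nil => intro _ i; simp [Matrix.one_apply]
  | cons A t ih =>
    intro hL i
    have ht := ih (fun B hB => hL B (List.mem_cons_of_mem _ hB))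
    have hA := hL A List.mem_cons_self
    simp only [List.prod_cons]
    have : ∀ j, (A * t.prod) i j = Matrix.vecMul (fun k => A i k) t.prod j := by
      intro j
      simp [Matrix.mul_apply, Matrix.vecMul, dotProduct]
    simp only [this]
    exact aux_sum_vecMul _ _ ht (hA i)

theorem stmt2 (Alp : Type) [Fintype Alp] (A : Set (List Alp)) (hA : InOneCeqLin A) :
    ∃ m : ℕ, 0 < m ∧
      ∀ n ℓ : ℕ, 1 ≤ n → ℓ ≤ n - 1 → ∀ z : List Alp, z.length = ℓ →
        ∃ S : Finset (List Alp),
          (∀ w ∈ S, w.length = n - ℓ ∧ w ++ z ∈ A) ∧ S.card ≤ m ∧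
          ∀ y : List Alp, y.length = ℓ → (∀ w ∈ S, w ++ y ∈ A) →
            ∀ x : List Alp, x.length = n - ℓ → x ++ z ∈ A → x ++ y ∈ A := by
  classical
  obtain ⟨Γ, iΓ, h, hlen, M, hM⟩ := hA
  letI := M.fin
  letI := M.dec
  have huniv : (Finset.univ : Finset M.Q) = M.fin.elems := rfl
  refine ⟨Fintype.card M.Q, Fintype.card_pos_iff.mpr ⟨M.start⟩, ?_⟩
  intro n ℓ hn hℓ z hz
  have hℓn : ℓ ≤ n := le_trans hℓ (Nat.sub_le n 1)
  have hadd : (n - ℓ) + ℓ = n := Nat.sub_add_cancel hℓn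
  set a : List Γ := (h n).take (n - ℓ) with ha_def
  set bl : List Γ := (h n).drop (n - ℓ) with hbl_def
  have ha : a.length = n - ℓ := by
    rw [ha_def, List.length_take, hlen n]; omega
  -- the state-distribution vector after reading `w` (on track with advice prefix `a`)
  set v0 : M.Q → ℚ := Matrix.vecMul (Pi.single M.start 1) M.matC with hv0_def
  set vec : List Alp → (M.Q → ℚ) :=
    fun w => Matrix.vecMul v0 ((w.zip a).map M.mat).prod with hvec_def
  -- acceptance probability decomposition
  have hacc : ∀ w y : List Alp, w.length = n - ℓ → y.length = ℓ →
      M.accProb ((w ++ y).zip (h ((w ++ y).length)))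
        = ∑ q ∈ M.final,
            Matrix.vecMul (Matrix.vecMul (vec w) ((y.zip bl).map M.mat).prod) M.matD q := by
    intro w y hw hy
    have hlen' : (w ++ y).length = n := by simp [hw, hy, hadd]
    rw [hlen']
    have hsplit : (w ++ y).zip (h n) = w.zip a ++ y.zip bl := by
      conv_lhs => rw [← List.take_append_drop (n - ℓ) (h n)]
      exact List.zip_append (by rw [hw, ha])
    unfold PFA.accProb
    rw [hsplit, aux_foldl_vecMul]
    simp only [List.map_append, List.prod_append, ← Matrix.vecMul_vecMul]
    rfl
  -- entries of `vec w` sum to 1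
  have hsum1 : ∀ w : List Alp, ∑ i, vec w i = 1 := by
    intro w
    have h0 : ∑ i, v0 i = 1 := by
      refine aux_sum_vecMul _ _ (fun i => ?_) ?_
      · rw [huniv]; exact M.rowC i
      · simp
    refine aux_sum_vecMul _ _ ?_ h0
    refine aux_prod_rowsum _ ?_
    intro B hB i
    obtain ⟨σ, _, rfl⟩ := List.mem_map.1 hB
    rw [huniv]; exact M.rowMat _ i
  -- the linear functional associated to a suffix `y`
  set G : List Alp → (M.Q → ℚ) → ℚ := fun y v =>
    (∑ q ∈ M.final,
      Matrix.vecMul (Matrix.vecMul v ((y.zip bl).map M.mat).prod) M.matD q)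
      - (1/2) * ∑ i, v i with hG_def
  have hmem : ∀ w y : List Alp, w.length = n - ℓ → y.length = ℓ →
      (w ++ y ∈ A ↔ G y (vec w) = 0) := by
    intro w y hw hy
    rw [hM, hacc w y hw hy]
    simp only [hG_def, hsum1 w, mul_one]
    constructor
    · intro hh; rw [hh]; ring
    · intro hh; linarith
  -- linearity of `G y`
  have hG0 : ∀ y, G y 0 = 0 := by
    intro y
    simp [hG_def, Matrix.zero_vecMul]
  have hGadd : ∀ y u v, G y (u + v) = G y u + G y v := by
    intro y u v
    simp only [hG_def, Matrix.add_vecMul, Pi.add_apply, Finset.sum_add_distrib, mul_add]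
    ring
  have hGsmul : ∀ y (c : ℚ) u, G y (c • u) = c * G y u := by
    intro y c u
    simp only [hG_def, Matrix.smul_vecMul, Pi.smul_apply, smul_eq_mul, ← Finset.mul_sum]
    ring
  -- the set of good prefixes and its image
  set A' : Set (List Alp) := {w | w.length = n - ℓ ∧ w ++ z ∈ A} with hA'_def
  set s : Set (M.Q → ℚ) := vec '' A' with hs_def
  obtain ⟨b, hbs, hspan, hli⟩ := exists_linearIndependent ℚ s
  have hbfin : b.Finite := hli.setFinite
  have hcard : hbfin.toFinset.card ≤ Fintype.card M.Q := by
    have h1 : hbfin.toFinset.card ≤ Module.finrank ℚ (M.Q → ℚ) := by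
      refine LinearIndependent.finset_card_le_finrank ?_
      have hb2 : LinearIndependent ℚ
          (fun x : (hbfin.toFinset : Set (M.Q → ℚ)) => (x : M.Q → ℚ)) := by
        rw [Set.Finite.coe_toFinset]
        exact hli
      exact hb2
    rwa [Module.finrank_pi ℚ] at h1
  -- choose a preimage word for each basis vector
  have hpick : ∀ u : {x // x ∈ hbfin.toFinset}, ∃ w, w ∈ A' ∧ vec w = (u : M.Q → ℚ) := by
    intro u
    have : (u : M.Q → ℚ) ∈ s := hbs (hbfin.mem_toFinset.1 u.2)
    exact this
  set pick : {x // x ∈ hbfin.toFinset} → List Alp := fun u => Classical.choose (hpick u)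
    with hpick_def
  have hpick_spec : ∀ u, pick u ∈ A' ∧ vec (pick u) = (u : M.Q → ℚ) :=
    fun u => Classical.choose_spec (hpick u)
  refine ⟨hbfin.toFinset.attach.image pick, ?_, ?_, ?_⟩
  · intro w hw
    obtain ⟨u, _, rfl⟩ := Finset.mem_image.1 hw
    exact (hpick_spec u).1
  · calc (hbfin.toFinset.attach.image pick).card
        ≤ hbfin.toFinset.attach.card := Finset.card_image_le
      _ = hbfin.toFinset.card := Finset.card_attach
      _ ≤ Fintype.card M.Q := hcard
  · intro y hy hyS x hx hxA
    have hxmem : vec x ∈ Submodule.span ℚ b := by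
      rw [hspan]
      exact Submodule.subset_span ⟨x, ⟨hx, hxA⟩, rfl⟩
    have hgen : ∀ u ∈ b, G y u = 0 := by
      intro u hu
      have humem : u ∈ hbfin.toFinset := hbfin.mem_toFinset.2 hu
      have hwS : pick ⟨u, humem⟩ ∈ hbfin.toFinset.attach.image pick :=
        Finset.mem_image.2 ⟨⟨u, humem⟩, Finset.mem_attach _ _, rfl⟩
      have hwy : pick ⟨u, humem⟩ ++ y ∈ A := hyS _ hwS
      have hwlen : (pick ⟨u, humem⟩).length = n - ℓ := (hpick_spec ⟨u, humem⟩).1.1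
      have := (hmem _ y hwlen hy).1 hwy
      rwa [(hpick_spec ⟨u, humem⟩).2] at this
    have hGx : G y (vec x) = 0 := by
      refine Submodule.span_induction (p := fun v _ => G y v = 0)
        (fun v hv => hgen v hv) (hG0 y) ?_ ?_ hxmem
      · intro u v _ _ h1 h2
        rw [hGadd y u v, h1, h2, add_zero]
      · intro c u _ h1
        rw [hGsmul y c u, h1, mul_zero]
    exact (hmem x y hx hy).2 hGx
end

section
/- The complement {0,1}* ∖ Dup of the language Dup of duplicated strings is not in 1C=LIN/lin; that is, for every finite advice alphabet Γ, every advice function h : ℕ → Γ* with |h(n)| = n, and every rational 1pfa M over the alphabet {0,1} × Γ, it is not the case that for all x ∈ {0,1}*: x ∉ Dup if and only if p_acc([x//h(|x|)]) = 1/2. Consequently, 1C=LIN/lin is not closed under complementation. -/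
open scoped BigOperators

section Upper
set_option maxHeartbeats 1600000


/-- distribution vector: (1/2 - a, a, 1/2 - b, b, 0) -/
def dvec (a b : ℚ) : Fin 5 → ℚ := ![1/2 - a, a, 1/2 - b, b, 0]

def sinkv : Fin 5 → ℚ := ![0, 0, 0, 0, 1]

def mA (c : Bool) : Matrix (Fin 5) (Fin 5) ℚ :=
  if c then !![3/4,1/4,0,0,0; 1/2,1/2,0,0,0; 0,0,1,0,0; 0,0,0,1,0; 0,0,0,0,1]
  else !![1,0,0,0,0; 3/4,1/4,0,0,0; 0,0,1,0,0; 0,0,0,1,0; 0,0,0,0,1]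

def mB (c : Bool) : Matrix (Fin 5) (Fin 5) ℚ :=
  if c then !![1,0,0,0,0; 0,1,0,0,0; 0,0,3/4,1/4,0; 0,0,1/2,1/2,0; 0,0,0,0,1]
  else !![1,0,0,0,0; 0,1,0,0,0; 0,0,1,0,0; 0,0,3/4,1/4,0; 0,0,0,0,1]

def mS : Matrix (Fin 5) (Fin 5) ℚ :=
  !![0,0,0,0,1; 0,0,0,0,1; 0,0,0,0,1; 0,0,0,0,1; 0,0,0,0,1]

def idM : Matrix (Fin 5) (Fin 5) ℚ :=
  !![1,0,0,0,0; 0,1,0,0,0; 0,0,1,0,0; 0,0,0,1,0; 0,0,0,0,1]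

def cM : Matrix (Fin 5) (Fin 5) ℚ :=
  !![1/2,0,1/2,0,0; 0,1,0,0,0; 0,0,1,0,0; 0,0,0,1,0; 0,0,0,0,1]

def matF : Bool × Fin 3 → Matrix (Fin 5) (Fin 5) ℚ :=
  fun σ => if σ.2 = 0 then mA σ.1 else if σ.2 = 1 then mB σ.1 else mS

lemma cM_nonneg : ∀ i j, 0 ≤ cM i j := by
  intro i j; fin_cases i <;> fin_cases j <;> norm_num [cM]
lemma idM_nonneg : ∀ i j, 0 ≤ idM i j := by
  intro i j; fin_cases i <;> fin_cases j <;> norm_num [idM]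
lemma matF_nonneg : ∀ (σ : Bool × Fin 3) i j, 0 ≤ matF σ i j := by
  rintro ⟨c, g⟩ i j
  fin_cases g <;> fin_cases c <;> fin_cases i <;> fin_cases j <;>
    norm_num [matF, mA, mB, mS, Fin.ext_iff]
lemma cM_row : ∀ i, ∑ j : Fin 5, cM i j = 1 := by
  intro i; fin_cases i <;> norm_num [cM, Fin.sum_univ_five, Matrix.cons_val_two, Matrix.cons_val_three, Matrix.cons_val_four]
lemma idM_row : ∀ i, ∑ j : Fin 5, idM i j = 1 := by
  intro i; fin_cases i <;> norm_num [idM, Fin.sum_univ_five, Matrix.cons_val_two, Matrix.cons_val_three, Matrix.cons_val_four]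
lemma matF_row : ∀ (σ : Bool × Fin 3) i, ∑ j : Fin 5, matF σ i j = 1 := by
  rintro ⟨c, g⟩ i
  fin_cases g <;> fin_cases c <;> fin_cases i <;>
    norm_num [matF, mA, mB, mS, Fin.ext_iff, Fin.sum_univ_five, Matrix.cons_val_two, Matrix.cons_val_three, Matrix.cons_val_four]

def dupPFA : PFA (Bool × Fin 3) where
  Q := Fin 5
  fin := inferInstance
  dec := inferInstance
  start := 0
  final := {1, 2}
  matC := cM
  matD := idM
  mat := matF
  nonnegC := cM_nonneg
  nonnegD := idM_nonneg
  nonnegMat := matF_nonneg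
  rowC := cM_row
  rowD := idM_row
  rowMat := matF_row

-- the "value" of a bit string
def valStep (a : ℚ) (c : Bool) : ℚ := a / 4 + (cond c 1 0) / 8

def bval (l : List Bool) : ℚ := l.foldl valStep 0

lemma vecMul_mA (a b : ℚ) (c : Bool) :
    Matrix.vecMul (dvec a b) (mA c) = dvec (valStep a c) b := by
  funext j
  cases c <;> fin_cases j <;>
    simp [dvec, mA, valStep, Matrix.vecMul, dotProduct, Fin.sum_univ_five, Matrix.vecHead, Matrix.vecTail] <;> ring

lemma vecMul_mB (a b : ℚ) (c : Bool) :
    Matrix.vecMul (dvec a b) (mB c) = dvec a (valStep b c) := by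
  funext j
  cases c <;> fin_cases j <;>
    simp [dvec, mB, valStep, Matrix.vecMul, dotProduct, Fin.sum_univ_five, Matrix.vecHead, Matrix.vecTail] <;> ring

lemma vecMul_mS (a b : ℚ) : Matrix.vecMul (dvec a b) mS = sinkv := by
  funext j
  fin_cases j <;>
    simp [dvec, mS, sinkv, Matrix.vecMul, dotProduct, Fin.sum_univ_five, Matrix.vecHead, Matrix.vecTail] <;> ring

lemma vecMul_sink_mS : Matrix.vecMul sinkv mS = sinkv := by
  funext j
  fin_cases j <;>
    simp [mS, sinkv, Matrix.vecMul, dotProduct, Fin.sum_univ_five, Matrix.vecHead, Matrix.vecTail]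

lemma vecMul_idM (v : Fin 5 → ℚ) : Matrix.vecMul v idM = v := by
  funext j
  fin_cases j <;>
    simp [idM, Matrix.vecMul, dotProduct, Fin.sum_univ_five, Matrix.vecHead, Matrix.vecTail]

lemma vecMul_start_cM : Matrix.vecMul (Pi.single (0 : Fin 5) (1:ℚ)) cM = dvec 0 0 := by
  funext j
  fin_cases j <;>
    simp [cM, dvec, Matrix.vecMul, dotProduct, Fin.sum_univ_five, Pi.single_apply]

end Upper

lemma matF0 (c : Bool) : matF (c, (0:Fin 3)) = mA c := by simp [matF]
lemma matF1 (c : Bool) : matF (c, (1:Fin 3)) = mB c := by simp [matF]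
lemma matF2 (c : Bool) : matF (c, (2:Fin 3)) = mS := by
  have h0 : ((2:Fin 3) = 0) = False := by simp
  have h1 : ((2:Fin 3) = 1) = False := by simp
  simp [matF, h0, h1]

lemma dupPFA_mat_eq : dupPFA.mat = matF := rfl

lemma dupPFA_mat0 (c : Bool) : dupPFA.mat (c, (0 : Fin 3)) = mA c := by
  rw [dupPFA_mat_eq, matF0]
lemma dupPFA_mat1 (c : Bool) : dupPFA.mat (c, (1 : Fin 3)) = mB c := by
  rw [dupPFA_mat_eq, matF1]
lemma dupPFA_mat2 (c : Bool) : dupPFA.mat (c, (2 : Fin 3)) = mS := by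
  rw [dupPFA_mat_eq, matF2]

lemma foldl_valStep_bounds : ∀ (l : List Bool) (a : ℚ), 0 ≤ a → a ≤ 1/6 →
    0 ≤ l.foldl valStep a ∧ l.foldl valStep a ≤ 1/6 := by
  intro l
  induction l with
  | nil => intro a h0 h1; exact ⟨h0, h1⟩
  | cons c t ih =>
      intro a h0 h1
      apply ih
      · cases c <;> simp [valStep] <;> linarith
      · cases c <;> simp [valStep] <;> linarith

lemma bval_nonneg (l : List Bool) : 0 ≤ bval l :=
  (foldl_valStep_bounds l 0 le_rfl (by norm_num)).1

lemma bval_le (l : List Bool) : bval l ≤ 1/6 :=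
  (foldl_valStep_bounds l 0 le_rfl (by norm_num)).2

lemma bval_concat (l : List Bool) (c : Bool) :
    bval (l ++ [c]) = (bval l)/4 + (cond c 1 0)/8 := by
  simp [bval, List.foldl_append, valStep]

lemma bval_inj : ∀ (l₁ : List Bool), ∀ l₂, l₁.length = l₂.length → bval l₁ = bval l₂ → l₁ = l₂ := by
  intro l₁
  induction l₁ using List.reverseRecOn with
  | nil =>
      intro l₂ hlen _
      exact (List.length_eq_zero_iff.mp hlen.symm).symm
  | append_singleton l c ih =>
      intro l₂ hlen hval
      rcases List.eq_nil_or_concat l₂ with rfl | ⟨L, b, rfl⟩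
      · simp at hlen
      · rw [List.concat_eq_append] at hlen hval ⊢
        rw [bval_concat, bval_concat] at hval
        have hll : l.length = L.length := by
          simp at hlen; omega
        have hb1 := bval_nonneg l
        have hb2 := bval_le l
        have hb3 := bval_nonneg L
        have hb4 := bval_le L
        have hcb : c = b := by
          cases c <;> cases b <;> simp at hval ⊢ <;> linarith
        subst hcb
        have : bval l = bval L := by
          cases c <;> simp at hval <;> linarith
        rw [ih L hll this]

lemma zip_replicate_eq_map (l : List Bool) (g : Fin 3) :
    l.zip (List.replicate l.length g) = l.map (fun c => (c, g)) := by
  induction l with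
  | nil => simp
  | cons c t ih => simp [List.replicate_succ, ih]

lemma zip_replicate_eq_map' (l : List Bool) (n : ℕ) (h : l.length = n) (g : Fin 3) :
    l.zip (List.replicate n g) = l.map (fun c => (c, g)) := by
  subst h; exact zip_replicate_eq_map l g

def advF : ℕ → List (Fin 3) := fun n =>
  if n % 2 = 0 then List.replicate (n/2) 0 ++ List.replicate (n/2) 1
  else List.replicate n 2

def pstep (v : Fin 5 → ℚ) (σ : Bool × Fin 3) : Fin 5 → ℚ := Matrix.vecMul v (dupPFA.mat σ)

lemma fold_first : ∀ (w : List Bool) (a b : ℚ),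
    (w.map (fun c => (c, (0:Fin 3)))).foldl pstep (dvec a b) = dvec (w.foldl valStep a) b := by
  intro w
  induction w with
  | nil => intro a b; rfl
  | cons c t ih =>
      intro a b
      simp only [List.map_cons, List.foldl_cons, pstep, dupPFA_mat0, vecMul_mA]
      exact ih _ b

lemma fold_second : ∀ (w : List Bool) (a b : ℚ),
    (w.map (fun c => (c, (1:Fin 3)))).foldl pstep (dvec a b) = dvec a (w.foldl valStep b) := by
  intro w
  induction w with
  | nil => intro a b; rfl
  | cons c t ih =>
      intro a b
      simp only [List.map_cons, List.foldl_cons, pstep, dupPFA_mat1, vecMul_mB]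
      exact ih a _

lemma fold_sink : ∀ (w : List Bool),
    (w.map (fun c => (c, (2:Fin 3)))).foldl pstep sinkv = sinkv := by
  intro w
  induction w with
  | nil => rfl
  | cons c t ih =>
      simp only [List.map_cons, List.foldl_cons, pstep, dupPFA_mat2, vecMul_sink_mS]
      exact ih

lemma dvec_sum_final (a b : ℚ) :
    ∑ q ∈ ({1, 2} : Finset (Fin 5)), dvec a b q = a + (1/2 - b) := by
  rw [Finset.sum_pair (by decide : (1 : Fin 5) ≠ 2)]
  simp [dvec]

theorem inOneCeqLin_dup : InOneCeqLin Dup := by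
  refine ⟨Fin 3, inferInstance, advF, ?_, dupPFA, ?_⟩
  · intro n
    by_cases hn : n % 2 = 0 <;> simp [advF, hn] <;> omega
  · intro x
    by_cases hx : x.length % 2 = 0
    · -- even length
      set m := x.length / 2 with hm
      have hml : m ≤ x.length := Nat.div_le_self _ _
      set w := x.take m with hw
      set w' := x.drop m with hw'
      have hwl : w.length = m := by simp [hw]; omega
      have hw'l : w'.length = m := by simp [hw']; omega
      have hxsplit : x = w ++ w' := (List.take_append_drop m x).symm
      have hadv : advF x.length = List.replicate m 0 ++ List.replicate m 1 := by
        unfold advF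
        rw [if_pos hx]
      have hzip : x.zip (List.replicate m (0 : Fin 3) ++ List.replicate m 1)
          = w.map (fun c => (c, (0:Fin 3))) ++ w'.map (fun c => (c, (1:Fin 3))) := by
        conv_lhs => rw [hxsplit]
        rw [List.zip_append (by rw [hwl, List.length_replicate])]
        rw [zip_replicate_eq_map' w m hwl, zip_replicate_eq_map' w' m hw'l]
      have hacc : dupPFA.accProb (x.zip (List.replicate m (0 : Fin 3) ++ List.replicate m 1))
          = bval w + (1/2 - bval w') := by
        unfold PFA.accProb
        rw [hzip]
        show (∑ q ∈ ({1,2} : Finset (Fin 5)),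
          Matrix.vecMul ((w.map (fun c => (c, (0:Fin 3))) ++ w'.map (fun c => (c, (1:Fin 3)))).foldl
            pstep (Matrix.vecMul (Pi.single (0 : Fin 5) (1:ℚ)) cM)) idM q) = _
        rw [vecMul_start_cM, List.foldl_append, fold_first, fold_second]
        have hid : ∀ v : Fin 5 → ℚ, Matrix.vecMul v idM = v := vecMul_idM
        rw [hid, dvec_sum_final]
        rfl
      have hmem : x ∈ Dup ↔ w = w' := by
        constructor
        · rintro ⟨u, hu⟩
          have hul : u.length = m := by
            have := congrArg List.length hu
            simp at this
            omega
          rw [hw, hw', hu, ← hul, List.take_left, List.drop_left]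
        · intro he
          exact ⟨w, by rw [hxsplit, he]⟩
      rw [hmem, hadv, hacc]
      constructor
      · intro he; rw [he]; ring
      · intro heq
        have : bval w = bval w' := by linarith
        exact bval_inj w w' (by rw [hwl, hw'l]) this
    · -- odd length
      have hxne : x ≠ [] := by
        intro h; rw [h] at hx; simp at hx
      have hadv : advF x.length = List.replicate x.length 2 := by
        unfold advF
        rw [if_neg hx]
      have hnotdup : x ∉ Dup := by
        rintro ⟨u, rfl⟩
        simp at hx
        omega
      have hacc : dupPFA.accProb (x.zip (List.replicate x.length 2)) = 0 := by
        unfold PFA.accProb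
        rw [zip_replicate_eq_map]
        obtain ⟨c, t, rfl⟩ := List.exists_cons_of_ne_nil hxne
        show (∑ q ∈ ({1,2} : Finset (Fin 5)),
          Matrix.vecMul (((c :: t).map (fun c => (c, (2:Fin 3)))).foldl
            pstep (Matrix.vecMul (Pi.single (0 : Fin 5) (1:ℚ)) cM)) idM q) = 0
        rw [vecMul_start_cM]
        simp only [List.map_cons, List.foldl_cons, pstep, dupPFA_mat2, vecMul_mS]
        rw [fold_sink, vecMul_idM]
        rw [Finset.sum_pair (by decide : (1 : Fin 5) ≠ 2)]
        simp [sinkv]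
      rw [hadv, hacc]
      constructor
      · intro h; exact absurd h hnotdup
      · intro heq; norm_num at heq

-- auxiliary lemmas for the lower bound

section LowerBound

variable {Γ : Type} [Fintype Γ]

/-- product of transition matrices along a string -/
def PFA.prodMat {Λ : Type} (M : PFA Λ) (l : List Λ) : Matrix M.Q M.Q ℚ :=
  letI := M.fin
  letI := M.dec
  (l.map M.mat).prod

lemma PFA.foldl_eq_vecMul_prodMat {Λ : Type} (M : PFA Λ) (l : List Λ) (v : M.Q → ℚ) :
    letI := M.fin
    letI := M.dec
    l.foldl (fun v σ => Matrix.vecMul v (M.mat σ)) v = Matrix.vecMul v (M.prodMat l) := by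
  letI := M.fin
  letI := M.dec
  induction l generalizing v with
  | nil => simp [PFA.prodMat]
  | cons a l ih =>
      simp only [List.foldl_cons, ih, PFA.prodMat, List.map_cons, List.prod_cons,
        Matrix.vecMul_vecMul]

lemma PFA.prodMat_append {Λ : Type} (M : PFA Λ) (l₁ l₂ : List Λ) :
    letI := M.fin
    letI := M.dec
    M.prodMat (l₁ ++ l₂) = M.prodMat l₁ * M.prodMat l₂ := by
  letI := M.fin
  letI := M.dec
  simp [PFA.prodMat]

lemma dup_append_iff {m : ℕ} (w w' : List.Vector Bool m) :
    (w.toList ++ w'.toList ∈ Dup) ↔ w = w' := by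
  constructor
  · rintro ⟨u, hu⟩
    have hlen : w.toList.length = u.length := by
      have h1 : w.toList.length = m := w.toList_length
      have h2 : w'.toList.length = m := w'.toList_length
      have := congrArg List.length hu
      simp [h1, h2] at this
      omega
    obtain ⟨h1, h2⟩ := List.append_inj hu hlen
    apply List.Vector.toList_injective
    rw [h1, h2]
  · rintro rfl
    exact ⟨w.toList, rfl⟩

theorem not_inOneCeqLin_dup_compl : ¬ InOneCeqLin Dupᶜ := by
  rintro ⟨Γ, iΓ, h, hlen, M, hM⟩
  letI := M.fin
  letI := M.dec
  set m : ℕ := Fintype.card M.Q + 1 with hm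
  -- split the advice for length 2m
  set adv : List Γ := h (2 * m) with hadv
  have hadvlen : adv.length = 2 * m := hlen _
  set h1 : List Γ := adv.take m with hh1
  set h2 : List Γ := adv.drop m with hh2
  have hh1len : h1.length = m := by
    rw [hh1, List.length_take, hadvlen]; omega
  have hsplit : h1 ++ h2 = adv := List.take_append_drop _ _
  -- vectors
  set u0 : M.Q → ℚ := Matrix.vecMul (Pi.single M.start 1) M.matC with hu0
  set χ : M.Q → ℚ := fun q => if q ∈ M.final then 1 else 0 with hχ
  set uvec : List.Vector Bool m → (M.Q → ℚ) :=
    fun w => Matrix.vecMul u0 (M.prodMat (w.toList.zip h1)) with huvec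
  set vvec : List.Vector Bool m → (M.Q → ℚ) :=
    fun w' => (M.prodMat (w'.toList.zip h2) * M.matD).mulVec χ with hvvec
  -- acceptance probability decomposition
  have key : ∀ w w' : List.Vector Bool m,
      M.accProb ((w.toList ++ w'.toList).zip (h (w.toList ++ w'.toList).length))
        = dotProduct (uvec w) (vvec w') := by
    intro w w'
    have hxlen : (w.toList ++ w'.toList).length = 2 * m := by
      simp [w.toList_length, w'.toList_length]; omega
    rw [hxlen]
    have hz : (w.toList ++ w'.toList).zip adv
        = w.toList.zip h1 ++ w'.toList.zip h2 := by
      rw [← hsplit]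
      exact List.zip_append (by rw [w.toList_length, hh1len])
    show M.accProb ((w.toList ++ w'.toList).zip adv) = _
    rw [hz]
    unfold PFA.accProb
    rw [M.foldl_eq_vecMul_prodMat, M.prodMat_append]
    have hsum : ∀ v : M.Q → ℚ, (∑ q ∈ M.final, v q) = dotProduct v χ := by
      intro v
      rw [dotProduct]
      simp only [hχ, mul_ite, mul_one, mul_zero]
      rw [Finset.sum_ite_mem, Finset.univ_inter]
    rw [hsum]
    simp only [huvec, hvvec, ← hu0]
    simp only [Matrix.dotProduct_mulVec, Matrix.vecMul_vecMul, mul_assoc]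
  -- rank argument
  set f : List.Vector Bool m → ((M.Q ⊕ Unit) → ℚ) :=
    fun w => Sum.elim (uvec w) (fun _ => 1) with hf
  have hnli : ¬ LinearIndependent ℚ f := by
    intro hli
    have := hli.fintype_card_le_finrank
    rw [Module.finrank_pi, card_vector] at this
    simp only [Fintype.card_sum, Fintype.card_bool, Fintype.card_unit] at this
    have : 2 ^ m ≤ m := by omega
    exact absurd this (Nat.not_le.mpr Nat.lt_two_pow_self)
  obtain ⟨g, hg0, w0, hgw0⟩ := Fintype.not_linearIndependent_iff.mp hnli
  -- the dual vector for w0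
  set gv : (M.Q ⊕ Unit) → ℚ := Sum.elim (vvec w0) (fun _ => -(1/2)) with hgv
  -- K w w' = accProb - 1/2
  have hK : ∀ w : List.Vector Bool m,
      dotProduct (f w) gv
        = M.accProb ((w.toList ++ w0.toList).zip (h (w.toList ++ w0.toList).length)) - 1/2 := by
    intro w
    rw [key w w0, dotProduct, dotProduct, Fintype.sum_sum_type]
    simp [hf, hgv]
    ring
  -- K w w0 = 0 for w ≠ w0, ≠ 0 for w = w0
  have hKoff : ∀ w, w ≠ w0 → dotProduct (f w) gv = 0 := by
    intro w hne
    rw [hK w]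
    have : (w.toList ++ w0.toList) ∈ Dupᶜ := by
      intro hmem
      exact hne ((dup_append_iff w w0).mp hmem)
    rw [(hM _).mp this]
    ring
  have hKdiag : dotProduct (f w0) gv ≠ 0 := by
    rw [hK w0]
    intro hzero
    have heq : M.accProb ((w0.toList ++ w0.toList).zip (h (w0.toList ++ w0.toList).length)) = 1/2 := by
      linarith [hzero]
    have : (w0.toList ++ w0.toList) ∈ Dupᶜ := (hM _).mpr heq
    exact this ((dup_append_iff w0 w0).mpr rfl)
  -- derive contradiction
  have hdot : ∑ w, g w * dotProduct (f w) gv = 0 := by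
    have hswap : ∑ w, g w * dotProduct (f w) gv
        = dotProduct (∑ w, g w • f w) gv := by
      simp only [dotProduct, Finset.sum_apply, Pi.smul_apply, smul_eq_mul,
        Finset.sum_mul, Finset.mul_sum, mul_assoc]
      rw [Finset.sum_comm]
    rw [hswap, hg0, zero_dotProduct]
  have hterms : ∀ w, g w * dotProduct (f w) gv
      = if w = w0 then g w0 * dotProduct (f w0) gv else 0 := by
    intro w
    by_cases hw : w = w0
    · subst hw; simp
    · simp [hw, hKoff w hw]
  rw [Finset.sum_congr rfl (fun w _ => hterms w)] at hdot
  rw [Finset.sum_ite_eq' Finset.univ w0] at hdot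
  simp only [Finset.mem_univ, if_true, mul_eq_zero] at hdot
  rcases hdot with h1 | h2
  · exact hgw0 h1
  · exact hKdiag h2

end LowerBound

theorem stmt3 : ¬ InOneCeqLin Dupᶜ ∧
    ∃ A : Set (List Bool), InOneCeqLin A ∧ ¬ InOneCeqLin Aᶜ := by
  exact ⟨not_inOneCeqLin_dup_compl, Dup, inOneCeqLin_dup, not_inOneCeqLin_dup_compl⟩
end

section
/- Every language belongs to 1C=LIN/Rlin: for every language A over a finite alphabet Σ, there exist a finite advice alphabet Γ, a rational 1pfa M over the alphabet Σ × Γ, and, for each n ∈ ℕ, a probability distribution D_n on Γ^n such that for every n and every x ∈ Σ^n: x ∈ A if and only if Σ_{y ∈ Γ^n} D_n(y) · p_acc([x//y]) = 1/2. -/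
open scoped BigOperators

namespace Stmt7Aux

open Classical

noncomputable section

variable {Alp : Type} [Fintype Alp]

/-- advice alphabet -/
abbrev Gm (Alp : Type) := Option Alp × Bool

/-- deterministic transition matrix -/
def detMat {Q : Type} [Fintype Q] [DecidableEq Q] (f : Q → Q) : Matrix Q Q ℚ :=
  Matrix.of fun i j => if f i = j then 1 else 0

/-- transition function: states 0,1 = "equal so far" (bit true/false), 2 = mismatch -/
def step (σ : Alp × Gm Alp) (q : Fin 5) : Fin 5 :=
  if q = 0 ∨ q = 1 then
    (if some σ.1 = σ.2.1 then (if σ.2.2 then 0 else 1) else 2)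
  else 2

/-- acceptance weight at the right endmarker -/
def accw (q : Fin 5) : ℚ := if q = 0 then 1/2 else if q = 2 then 1/2 else 0

def matD5 : Matrix (Fin 5) (Fin 5) ℚ :=
  Matrix.of fun i j => if j = 3 then accw i else if j = 4 then 1 - accw i else 0

lemma accw_nonneg (q : Fin 5) : 0 ≤ accw q := by unfold accw; split_ifs <;> norm_num

lemma accw_le_one (q : Fin 5) : accw q ≤ 1 := by unfold accw; split_ifs <;> norm_num

@[reducible] def mach (A : Set (List Alp)) : PFA (Alp × Gm Alp) where
  Q := Fin 5
  fin := inferInstance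
  dec := inferInstance
  start := if ([] : List Alp) ∈ A then 0 else 1
  final := {3}
  matC := detMat id
  matD := matD5
  mat := fun σ => detMat (step σ)
  nonnegC := by intro i j; simp only [detMat, Matrix.of_apply]; split_ifs <;> norm_num
  nonnegD := by
    intro i j
    simp only [matD5, Matrix.of_apply]
    split_ifs
    · exact accw_nonneg i
    · have := accw_le_one i; linarith
    · norm_num
  nonnegMat := by intro σ i j; simp only [detMat, Matrix.of_apply]; split_ifs <;> norm_num
  rowC := by
    intro i
    show ∑ j, detMat id i j = 1
    simp [detMat]
  rowD := by
    intro i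
    show ∑ j, matD5 i j = 1
    simp [matD5, Fin.sum_univ_five]
  rowMat := by
    intro σ i
    show ∑ j, detMat (step σ) i j = 1
    simp [detMat]

lemma vecMul_single {Q : Type} [Fintype Q] [DecidableEq Q] (q : Q) (M : Matrix Q Q ℚ) :
    Matrix.vecMul (Pi.single q 1) M = M q := by
  ext j
  simp [Matrix.vecMul, dotProduct, Pi.single_apply, ite_mul]

lemma detMat_row {Q : Type} [Fintype Q] [DecidableEq Q] (f : Q → Q) (q : Q) :
    detMat f q = Pi.single (f q) (1 : ℚ) := by
  ext j
  simp [detMat, Pi.single_apply, eq_comm]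

lemma fold_vecMul {T : Type} (g : T → Fin 5 → Fin 5) : ∀ (l : List T) (q : Fin 5),
    l.foldl (fun v σ => Matrix.vecMul v (detMat (g σ))) (Pi.single q 1)
      = Pi.single (l.foldl (fun q σ => g σ q) q) (1 : ℚ) := by
  intro l
  induction l with
  | nil => intro q; rfl
  | cons σ l ih =>
    intro q
    simp only [List.foldl_cons, vecMul_single, detMat_row]
    exact ih (g σ q)

lemma accProb_eval (A : Set (List Alp)) (l : List (Alp × Gm Alp)) :
    (mach A).accProb l = accw (l.foldl (fun q σ => step σ q) (mach A).start) := by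
  show ∑ q ∈ ({3} : Finset (Fin 5)), _ = _
  rw [Finset.sum_singleton]
  have h1 : Matrix.vecMul (Pi.single (mach A).start 1) (mach A).matC
      = Pi.single (mach A).start (1 : ℚ) := by
    show Matrix.vecMul _ (detMat id) = _
    rw [vecMul_single, detMat_row, id]
  show (Matrix.vecMul
      (l.foldl (fun v σ => Matrix.vecMul v (detMat (step σ)))
        (Matrix.vecMul (Pi.single (mach A).start 1) (detMat id))) matD5) 3 = _
  rw [show Matrix.vecMul (Pi.single (mach A).start 1) (detMat id)
      = Pi.single (mach A).start (1 : ℚ) by rw [vecMul_single, detMat_row, id],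
    fold_vecMul, vecMul_single]
  simp [matD5]

lemma run_absorb (l : List (Alp × Gm Alp)) :
    l.foldl (fun q σ => step σ q) 2 = 2 := by
  induction l with
  | nil => rfl
  | cons σ l ih => simpa [step] using ih

lemma run_eq (b : Bool) : ∀ (x w : List Alp), x.length = w.length →
    ∀ q0 : Fin 5, (q0 = 0 ∨ q0 = 1) →
    (x.zip (w.map fun a => ((some a, b) : Gm Alp))).foldl (fun q σ => step σ q) q0
      = if x = w then (if x = [] then q0 else (if b then 0 else 1)) else 2 := by
  intro x
  induction x with
  | nil =>
    intro w hw q0 _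
    have hwnil : w = [] := List.length_eq_zero_iff.mp hw.symm
    subst hwnil
    simp
  | cons a x ih =>
    intro w hw q0 hq0
    cases w with
    | nil => simp at hw
    | cons c w =>
      simp only [List.length_cons, Nat.succ.injEq] at hw
      simp only [List.map_cons, List.zip_cons_cons, List.foldl_cons]
      by_cases hac : a = c
      · have hstep : step (a, (some c, b)) q0 = (if b then 0 else 1) := by
          rcases hq0 with h | h <;> simp [step, h, hac]
        rw [hstep]
        rw [ih w hw _ (by cases b <;> simp)]
        by_cases hxw : x = w
        · simp [hxw, hac]
        · simp [hxw, hac]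
      · have hstep : step (a, (some c, b)) q0 = 2 := by
          rcases hq0 with h | h <;> simp [step, h, hac]
        rw [hstep, run_absorb]
        simp [hac]

def bitOf (A : Set (List Alp)) (w : List Alp) : Bool :=
  if w ∈ A then true else false

def enc (A : Set (List Alp)) {n : ℕ} (w : List.Vector Alp n) : List.Vector (Gm Alp) n :=
  w.map fun a => (some a, bitOf A w.toList)

lemma accProb_enc (A : Set (List Alp)) {n : ℕ} (x : List Alp) (hx : x.length = n)
    (w : List.Vector Alp n) :
    (mach A).accProb (x.zip (enc A w).toList)
      = if x = w.toList then (if x ∈ A then 1/2 else 0) else 1/2 := by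
  rw [accProb_eval]
  have htl : (enc A w).toList = w.toList.map fun a => ((some a, bitOf A w.toList) : Gm Alp) :=
    List.Vector.toList_map w _
  have hlen : x.length = w.toList.length := by rw [hx, w.toList_length]
  have hstart : (mach A).start = 0 ∨ (mach A).start = 1 := by
    by_cases h : ([] : List Alp) ∈ A
    · left; simp [mach, h]
    · right; simp [mach, h]
  rw [htl, run_eq (bitOf A w.toList) x w.toList hlen _ hstart]
  by_cases hxw : x = w.toList
  · rw [if_pos hxw, if_pos hxw]
    by_cases hnil : x = []
    · rw [if_pos hnil]
      have hwnil : w.toList = [] := hxw ▸ hnil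
      by_cases hA : x ∈ A
      · have h0 : (mach A).start = 0 := by
          simp [mach, show ([] : List Alp) ∈ A from hnil ▸ hA]
        rw [h0]; simp [accw, hA]
      · have h1 : (mach A).start = 1 := by
          simp [mach, show ([] : List Alp) ∉ A from hnil ▸ hA]
        rw [h1]; simp [accw, hA]
    · rw [if_neg hnil]
      by_cases hA : x ∈ A
      · have hb : bitOf A w.toList = true := by simp [bitOf, ← hxw, hA]
        rw [hb]; simp [accw, hA]
      · have hb : bitOf A w.toList = false := by simp [bitOf, ← hxw, hA]
        rw [hb]; simp [accw, hA]
  · simp [hxw, accw]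

def Dfun (A : Set (List Alp)) (n : ℕ) (y : List.Vector (Gm Alp) n) : ℝ :=
  if Nonempty (List.Vector Alp n) then
    ∑ w : List.Vector Alp n, if enc A w = y then ((Fintype.card Alp : ℝ) ^ n)⁻¹ else 0
  else if y = List.Vector.replicate n (none, false) then 1 else 0

lemma pow_card_ne {n : ℕ} (hn : Nonempty (List.Vector Alp n)) :
    ((Fintype.card Alp : ℝ)) ^ n ≠ 0 := by
  rcases n with _ | n
  · simp
  · obtain ⟨v⟩ := hn
    have : Nonempty Alp := ⟨v.head⟩
    have := Fintype.card_pos (α := Alp)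
    positivity

lemma Dfun_isDist (A : Set (List Alp)) (n : ℕ) : IsDist (Dfun A n) := by
  constructor
  · intro y
    unfold Dfun
    split_ifs with h
    · apply Finset.sum_nonneg
      intro w _
      split_ifs <;> positivity
    all_goals norm_num
  · by_cases hn : Nonempty (List.Vector Alp n)
    · simp only [Dfun, if_pos hn]
      rw [Finset.sum_comm]
      simp only [Finset.sum_ite_eq, Finset.mem_univ, if_pos]
      rw [Finset.sum_const, Finset.card_univ, card_vector, nsmul_eq_mul]
      push_cast
      rw [mul_inv_cancel₀ (pow_card_ne hn)]
    · simp only [Dfun, if_neg hn]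
      rw [Finset.sum_ite_eq']
      simp

end

end Stmt7Aux

theorem stmt7 (Alp : Type) [Fintype Alp] (A : Set (List Alp)) :
    ∃ (Γ : Type) (iΓ : Fintype Γ),
      letI := iΓ
      ∃ (M : PFA (Alp × Γ)) (D : (n : ℕ) → List.Vector Γ n → ℝ),
        (∀ n, IsDist (D n)) ∧
        ∀ (n : ℕ) (x : List Alp), x.length = n →
          (x ∈ A ↔
            ∑ y : List.Vector Γ n, D n y * (M.accProb (x.zip y.toList) : ℝ) = 1 / 2) := by
  classical
  refine ⟨Stmt7Aux.Gm Alp, inferInstance, Stmt7Aux.mach A, Stmt7Aux.Dfun A,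
    fun n => Stmt7Aux.Dfun_isDist A n, ?_⟩
  intro n x hx
  have hn : Nonempty (List.Vector Alp n) := ⟨⟨x, hx⟩⟩
  set w0 : List.Vector Alp n := ⟨x, hx⟩ with hw0
  set c : ℝ := if x ∈ A then 1/2 else 0 with hc
  set r : ℝ := ((Fintype.card Alp : ℝ) ^ n)⁻¹ with hr
  have hw0l : w0.toList = x := rfl
  have hkey : ∀ w : List.Vector Alp n,
      (((Stmt7Aux.mach A).accProb (x.zip (Stmt7Aux.enc A w).toList) : ℚ) : ℝ)
        = if w = w0 then c else 1/2 := by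
    intro w
    rw [Stmt7Aux.accProb_enc A x hx w]
    by_cases hw : w = w0
    · rw [if_pos hw, if_pos (by rw [hw, hw0l])]
      rw [hc]; split_ifs <;> norm_num
    · rw [if_neg (fun h : x = w.toList =>
        hw (List.Vector.eq w w0 (by rw [hw0l, h]))), if_neg hw]
      norm_num
  have hsum : ∑ y : List.Vector (Stmt7Aux.Gm Alp) n,
      Stmt7Aux.Dfun A n y * (((Stmt7Aux.mach A).accProb (x.zip y.toList) : ℚ) : ℝ)
      = ∑ w : List.Vector Alp n, r * (if w = w0 then c else 1/2) := by
    simp only [Stmt7Aux.Dfun, if_pos hn, Finset.sum_mul, ite_mul, zero_mul]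
    rw [Finset.sum_comm]
    refine Finset.sum_congr rfl fun w _ => ?_
    rw [Finset.sum_ite_eq, if_pos (Finset.mem_univ _), hkey w, ← hr]
  have hNr : (Fintype.card Alp : ℝ) ^ n * r = 1 :=
    mul_inv_cancel₀ (Stmt7Aux.pow_card_ne hn)
  have hrne : r ≠ 0 := inv_ne_zero (Stmt7Aux.pow_card_ne hn)
  have hsplit : ∑ w : List.Vector Alp n, r * (if w = w0 then c else 1/2)
      = 1/2 + r * (c - 1/2) := by
    have h1 : ∀ w : List.Vector Alp n, r * (if w = w0 then c else 1/2)
        = r * (1/2) + (if w = w0 then r * (c - 1/2) else 0) := by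
      intro w; split_ifs <;> ring
    simp_rw [h1]
    rw [Finset.sum_add_distrib, Finset.sum_const, Finset.card_univ, card_vector,
      Finset.sum_ite_eq', if_pos (Finset.mem_univ _), nsmul_eq_mul]
    push_cast
    nlinarith [hNr]
  rw [hsum, hsplit]
  constructor
  · intro hA
    rw [hc, if_pos hA]
    ring
  · intro h
    by_contra hA
    rw [hc, if_neg hA] at h
    have : r * (0 - 1/2) = 0 := by linarith
    have : r = 0 := by linarith [this]
    exact hrne this
end

section
/- For every rational 1pfa N over a product alphabet Σ × Γ and every family {D_n}_{n∈ℕ} of probability distributions D_n on Γ^n, there exist a finite alphabet Δ, a DFA M over the alphabet Σ × Δ, and a family {D̃_n}_{n∈ℕ} of probability distributions D̃_n on Δ^n such that for every n ≥ 1 and every x ∈ Σ^n: Pr_{w∼D̃_n}[M accepts [x//w]] = Σ_{y ∈ Γ^n} D_n(y) · p_acc(N, [x//y]). In other words, a 1pfa with randomized advice can be simulated by a deterministic finite automaton with (enlarged) randomized advice achieving exactly the same acceptance probabilities. -/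
open scoped BigOperators

open Finset

section StmtEightAux

lemma card_sigma_fiber {β : Type} [Fintype β] [DecidableEq β] (c : β → ℕ) (b : β) :
    ((Finset.univ.filter fun s : Σ b', Fin (c b') => s.1 = b).card) = c b := by
  rw [Finset.card_filter, ← Finset.univ_sigma_univ, Finset.sum_sigma]
  simp [apply_ite Finset.card, Finset.sum_ite_eq']

lemma exists_fiber_fun {β : Type} [Fintype β] [DecidableEq β] (c : β → ℕ) (n : ℕ)
    (h : ∑ b, c b = n) : ∃ f : Fin n → β, ∀ b,
      (Finset.univ.filter fun r => f r = b).card = c b := by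
  have hcard : Fintype.card (Σ b, Fin (c b)) = n := by simp [h]
  let e := Fintype.equivFinOfCardEq hcard
  refine ⟨fun r => (e.symm r).1, fun b => ?_⟩
  rw [← card_sigma_fiber c b]
  exact Finset.card_equiv e.symm (by simp)

lemma exists_nat_mul {e : ℚ} (he : 0 ≤ e) {d : ℕ} (hd : e.den ∣ d) :
    ∃ m : ℕ, (m : ℚ) = d * e := by
  obtain ⟨k, hk⟩ := hd
  have hnum : 0 ≤ e.num := Rat.num_nonneg.mpr he
  refine ⟨(k * e.num).toNat, ?_⟩
  have h1 : (((k : ℤ) * e.num).toNat : ℚ) = ((k : ℚ)) * ((e.num : ℚ)) := by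
    have := Int.toNat_of_nonneg (mul_nonneg (Int.ofNat_nonneg k) hnum)
    exact_mod_cast congrArg (fun z : ℤ => (z : ℚ)) this
  have h0 : ((e.den : ℚ)) ≠ 0 := by exact_mod_cast (Rat.den_pos e).ne'
  have hden : (e.den : ℚ) * e = (e.num : ℚ) := by
    have h2 := congrArg (fun t : ℚ => (e.den : ℚ) * t) (Rat.num_div_den e)
    rw [← h2, mul_comm, div_mul_cancel₀ _ h0]
  have hdq : (d : ℚ) = (e.den : ℚ) * (k : ℚ) := by exact_mod_cast hk
  rw [h1, hdq, mul_assoc, mul_comm (k:ℚ) e, ← mul_assoc, hden, mul_comm]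

lemma exists_sampler {β : Type} [Fintype β] [DecidableEq β] (p : β → ℚ)
    (hp : ∀ b, 0 ≤ p b) (hsum : ∑ b, p b = 1) {d : ℕ} (hden : ∀ b, (p b).den ∣ d) :
    ∃ f : Fin d → β, ∀ b,
      ((Finset.univ.filter fun r => f r = b).card : ℚ) = d * p b := by
  choose m hm using fun b => exists_nat_mul (hp b) (hden b)
  have hs : ∑ b, m b = d := by
    have : ((∑ b, m b : ℕ) : ℚ) = ((d : ℕ) : ℚ) := by
      push_cast
      simp only [hm]
      rw [← Finset.mul_sum, hsum, mul_one]
    exact_mod_cast this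
  obtain ⟨f, hf⟩ := exists_fiber_fun m d hs
  exact ⟨f, fun b => by rw [hf b, hm b]⟩

lemma sum_comp_count {ι β : Type} [Fintype ι] [Fintype β] [DecidableEq β]
    (f : ι → β) (φ : β → ℚ) :
    ∑ r, φ (f r) = ∑ b, ((Finset.univ.filter fun r => f r = b).card : ℚ) * φ b := by
  rw [← Finset.sum_fiberwise Finset.univ f (fun r => φ (f r))]
  refine Finset.sum_congr rfl fun b _ => ?_
  have h2 : ∑ r ∈ Finset.univ.filter (fun r => f r = b), φ (f r)
      = (Finset.univ.filter fun r => f r = b).card • φ b := by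
    rw [← Finset.sum_const]
    exact Finset.sum_congr rfl fun r hr => by rw [(Finset.mem_filter.mp hr).2]
  rw [h2, nsmul_eq_mul]

def vzipEquiv (α β : Type) (n : ℕ) :
    List.Vector α n × List.Vector β n ≃ List.Vector (α × β) n where
  toFun p := ⟨p.1.toList.zip p.2.toList, by
    rw [List.length_zip, p.1.toList_length, p.2.toList_length, min_self]⟩
  invFun v := (v.map Prod.fst, v.map Prod.snd)
  left_inv p := by
    obtain ⟨u, w⟩ := p
    refine Prod.ext (Subtype.ext ?_) (Subtype.ext ?_)
    · show (u.toList.zip w.toList).map Prod.fst = u.toList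
      exact List.map_fst_zip (le_of_eq (by rw [u.toList_length, w.toList_length]))
    · show (u.toList.zip w.toList).map Prod.snd = w.toList
      exact List.map_snd_zip (le_of_eq (by rw [u.toList_length, w.toList_length]))
  right_inv v := by
    refine Subtype.ext ?_
    show ((v.toList.map Prod.fst).zip (v.toList.map Prod.snd)) = v.toList
    have h := List.zip_unzip v.toList
    rwa [List.unzip_eq_map] at h

@[simp] lemma vzipEquiv_toList {α β : Type} {n : ℕ} (u : List.Vector α n)
    (w : List.Vector β n) :
    ((vzipEquiv α β n) (u, w)).toList = u.toList.zip w.toList := rfl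

@[simp] lemma vzipEquiv_map_fst {α β : Type} {n : ℕ} (u : List.Vector α n)
    (w : List.Vector β n) :
    ((vzipEquiv α β n) (u, w)).map Prod.fst = u := by
  refine Subtype.ext ?_
  show (u.toList.zip w.toList).map Prod.fst = u.toList
  exact List.map_fst_zip (le_of_eq (by rw [u.toList_length, w.toList_length]))

def vconsEquiv (α : Type) (n : ℕ) :
    α × List.Vector α n ≃ List.Vector α (n + 1) where
  toFun p := p.1 ::ᵥ p.2
  invFun v := (v.head, v.tail)
  left_inv p := by simp
  right_inv v := v.cons_head_tail

lemma card_vector_fin (d m : ℕ) :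
    (Fintype.card (List.Vector (Fin d) m) : ℚ) = (d : ℚ) ^ m := by
  rw [card_vector, Fintype.card_fin]; push_cast; ring

lemma zip5_map {A B C D E : Type} :
    ∀ (l1 : List A) (l2 : List B) (l3 : List C) (l4 : List D) (l5 : List E),
      l1.length = l2.length → l2.length = l3.length → l3.length = l4.length →
      l4.length = l5.length →
      ((l1.zip (l2.zip (l3.zip (l4.zip l5)))).map fun p => ((p.1, p.2.1), p.2.2.2.1))
        = (l1.zip l2).zip l4 := by
  intro l1
  induction l1 with
  | nil => intros; simp
  | cons a l1 ih =>
    intro l2 l3 l4 l5 h1 h2 h3 h4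
    cases l2 with
    | nil => simp at h1
    | cons b l2 =>
      cases l3 with
      | nil => simp at h2
      | cons c l3 =>
        cases l4 with
        | nil => simp at h3
        | cons dd l4 =>
          cases l5 with
          | nil => simp at h4
          | cons e l5 =>
            simp only [List.zip_cons_cons, List.map_cons]
            rw [ih l2 l3 l4 l5 (by simpa using h1) (by simpa using h2)
              (by simpa using h3) (by simpa using h4)]



lemma step_sum {Q : Type} [Fintype Q] [DecidableEq Q] {d : ℕ} (Mσ : Matrix Q Q ℚ)
    (f : Q → Fin d → Q)
    (hf : ∀ q q', ((Finset.univ.filter fun r => f q r = q').card : ℚ) = d * Mσ q q')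
    (v ψ : Q → ℚ) :
    ∑ q0, ∑ r0 : Fin d, v q0 * ψ (f q0 r0)
      = d * ∑ q1, (Matrix.vecMul v Mσ) q1 * ψ q1 := by
  have h1 : ∀ q0, ∑ r0 : Fin d, ψ (f q0 r0) = ∑ q1, ((d : ℚ) * Mσ q0 q1) * ψ q1 := by
    intro q0
    rw [sum_comp_count (f q0) ψ]
    exact Finset.sum_congr rfl fun q1 _ => by rw [hf]
  calc ∑ q0, ∑ r0 : Fin d, v q0 * ψ (f q0 r0)
      = ∑ q0, v q0 * ∑ q1, ((d : ℚ) * Mσ q0 q1) * ψ q1 := by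
        refine Finset.sum_congr rfl fun q0 _ => ?_
        rw [← Finset.mul_sum, h1]
    _ = d * ∑ q1, (Matrix.vecMul v Mσ) q1 * ψ q1 := by
        simp only [Matrix.vecMul, dotProduct, Finset.mul_sum, Finset.sum_mul]
        rw [Finset.sum_comm]
        exact Finset.sum_congr rfl fun q1 _ => Finset.sum_congr rfl fun q0 _ => by ring

lemma run_lemma {Q S : Type} [Fintype Q] [DecidableEq Q] {d : ℕ}
    (mat : S → Matrix Q Q ℚ) (g : S → Q → Fin d → Q)
    (hg : ∀ σ q q', ((Finset.univ.filter fun r => g σ q r = q').card : ℚ) = d * mat σ q q')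
    (φ : Q → ℚ) :
    ∀ (z : List S) (v : Q → ℚ),
      ∑ s : List.Vector (Fin d) z.length, ∑ q0, v q0 *
          φ ((z.zip s.toList).foldl (fun q p => g p.1 q p.2) q0)
        = (d : ℚ) ^ z.length *
          ∑ q', (z.foldl (fun w σ => Matrix.vecMul w (mat σ)) v) q' * φ q' := by
  intro z
  induction z with
  | nil =>
    intro v
    simp only [List.length_nil, List.zip_nil_left, List.foldl_nil, pow_zero, one_mul]
    rw [Finset.sum_const, Finset.card_univ, card_vector, pow_zero, one_smul]
  | cons σ z' ih =>
    intro v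
    simp only [List.length_cons]
    have reidx := Equiv.sum_comp (vconsEquiv (Fin d) z'.length)
      (fun s : List.Vector (Fin d) (z'.length + 1) => ∑ q0, v q0 *
        φ (((σ :: z').zip s.toList).foldl (fun q p => g p.1 q p.2) q0))
    rw [← reidx, Fintype.sum_prod_type]
    simp only [vconsEquiv, Equiv.coe_fn_mk, List.Vector.toList_cons, List.zip_cons_cons,
      List.foldl_cons]
    rw [Finset.sum_comm]
    have hstep : ∀ s' : List.Vector (Fin d) z'.length,
        ∑ r0 : Fin d, ∑ q0, v q0 *
            φ ((z'.zip s'.toList).foldl (fun q p => g p.1 q p.2) (g σ q0 r0))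
          = (d : ℚ) * ∑ q1, (Matrix.vecMul v (mat σ)) q1 *
              φ ((z'.zip s'.toList).foldl (fun q p => g p.1 q p.2) q1) := by
      intro s'
      rw [Finset.sum_comm]
      exact step_sum (mat σ) (g σ) (hg σ) v
        (fun q1 => φ ((z'.zip s'.toList).foldl (fun q p => g p.1 q p.2) q1))
    simp only [hstep]
    rw [← Finset.mul_sum, ih (Matrix.vecMul v (mat σ))]
    ring


lemma run_lemma' {Q S : Type} [Fintype Q] [DecidableEq Q] {d : ℕ}
    (mat : S → Matrix Q Q ℚ) (g : S → Q → Fin d → Q)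
    (hg : ∀ σ q q', ((Finset.univ.filter fun r => g σ q r = q').card : ℚ) = d * mat σ q q')
    (φ : Q → ℚ) (z : List S) (m : ℕ) (hm : z.length = m) (v : Q → ℚ) :
    ∑ s : List.Vector (Fin d) m, ∑ q0, v q0 *
        φ ((z.zip s.toList).foldl (fun q p => g p.1 q p.2) q0)
      = (d : ℚ) ^ m * ∑ q', (z.foldl (fun w σ => Matrix.vecMul w (mat σ)) v) q' * φ q' := by
  subst hm
  exact run_lemma mat g hg φ z v

lemma alg3 {Q : Type} [Fintype Q] (dq : ℚ) (C : Q → ℚ) (A : Q → Q → ℚ) (B : Q → ℚ) :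
    dq * ∑ q0, (dq * C q0) * ∑ q1, (dq * A q0 q1) * B q1
      = dq ^ 3 * ∑ q1, (∑ q0, C q0 * A q0 q1) * B q1 := by
  have e1 : ∀ q0, (dq * C q0) * ∑ q1, (dq * A q0 q1) * B q1
      = ∑ q1, dq * dq * (C q0 * (A q0 q1 * B q1)) := by
    intro q0; rw [Finset.mul_sum]; exact Finset.sum_congr rfl fun _ _ => by ring
  have e2 : ∀ q1, (∑ q0, C q0 * A q0 q1) * B q1 = ∑ q0, C q0 * (A q0 q1 * B q1) := by
    intro q1; rw [Finset.sum_mul]; exact Finset.sum_congr rfl fun _ _ => by ring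
  simp only [e1, e2]
  rw [Finset.sum_comm]
  rw [Finset.mul_sum, Finset.mul_sum]
  refine Finset.sum_congr rfl fun q1 _ => ?_
  rw [Finset.mul_sum, Finset.mul_sum]
  exact Finset.sum_congr rfl fun q0 _ => by ring

end StmtEightAux


theorem stmt8 (Alp Γ : Type) [Fintype Alp] [Fintype Γ] (N : PFA (Alp × Γ))
    (D : (n : ℕ) → List.Vector Γ n → ℝ) (hD : ∀ n, IsDist (D n)) :
    ∃ (Dl : Type) (iDl : Fintype Dl),
      letI := iDl
      ∃ (Q : Type) (_ : Fintype Q) (M : DFA (Alp × Dl) Q)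
        (E : (n : ℕ) → List.Vector Dl n → ℝ),
        (∀ n, IsDist (E n)) ∧
        ∀ n : ℕ, 1 ≤ n → ∀ x : List Alp, x.length = n →
          randAccProb M.accepts (E n) x
            = ∑ y : List.Vector Γ n, D n y * (N.accProb (x.zip y.toList) : ℝ) := by
  classical
  letI : Fintype N.Q := N.fin
  letI : DecidableEq N.Q := N.dec
  -- common denominator d
  set dC := ∏ p : N.Q × N.Q, (N.matC p.1 p.2).den with hdCdef
  set dD := ∏ p : N.Q × N.Q, (N.matD p.1 p.2).den with hdDdef
  set dM := ∏ p : (Alp × Γ) × N.Q × N.Q, (N.mat p.1 p.2.1 p.2.2).den with hdMdef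
  set d := dC * dD * dM with hddef
  have hdpos : 0 < d := by
    refine Nat.mul_pos (Nat.mul_pos ?_ ?_) ?_ <;>
      exact Finset.prod_pos fun p _ => Rat.den_pos _
  have hd0 : ((d : ℚ)) ≠ 0 := by exact_mod_cast hdpos.ne'
  have hd0R : ((d : ℝ)) ≠ 0 := by exact_mod_cast hdpos.ne'
  -- row sums over univ
  have hrowC : ∀ i, ∑ j, N.matC i j = 1 := N.rowC
  have hrowD : ∀ i, ∑ j, N.matD i j = 1 := N.rowD
  have hrowM : ∀ σ i, ∑ j, N.mat σ i j = 1 := N.rowMat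
  -- divisibility of denominators
  have hdvC : ∀ i j, (N.matC i j).den ∣ d := fun i j =>
    dvd_mul_of_dvd_left (dvd_mul_of_dvd_left
      (Finset.dvd_prod_of_mem _ (Finset.mem_univ (i, j))) dD) dM
  have hdvD : ∀ i j, (N.matD i j).den ∣ d := fun i j =>
    dvd_mul_of_dvd_left (dvd_mul_of_dvd_right
      (Finset.dvd_prod_of_mem _ (Finset.mem_univ (i, j))) dC) dM
  have hdvM : ∀ σ i j, (N.mat σ i j).den ∣ d := fun σ i j =>
    dvd_mul_of_dvd_right
      (Finset.dvd_prod_of_mem _ (Finset.mem_univ (σ, i, j))) (dC * dD)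
  -- samplers
  choose gC hgC using fun q : N.Q =>
    exists_sampler (fun q' => N.matC q q') (N.nonnegC q) (hrowC q) (fun q' => hdvC q q')
  choose gD' hgD using fun q : N.Q =>
    exists_sampler (fun q' => N.matD q q') (N.nonnegD q) (hrowD q) (fun q' => hdvD q q')
  choose gM hgM using fun (σ : Alp × Γ) (q : N.Q) =>
    exists_sampler (fun q' => N.mat σ q q') (N.nonnegMat σ q) (hrowM σ q)
      (fun q' => hdvM σ q q')
  -- the DFA
  let M : DFA (Alp × (Γ × (Fin d × Fin d × Fin d))) (Option (N.Q × Fin d)) :=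
    { step := fun s p =>
        match s with
        | none => some (gM (p.1, p.2.1) (gC N.start p.2.2.1) p.2.2.2.1, p.2.2.2.2)
        | some qt => some (gM (p.1, p.2.1) qt.1 p.2.2.2.1, qt.2)
      start := none
      accept := {s | ∃ q t, s = some (q, t) ∧ gD' q t ∈ N.final} }
  have hstep1 : ∀ p, M.step none p
      = some (gM (p.1, p.2.1) (gC N.start p.2.2.1) p.2.2.2.1, p.2.2.2.2) := fun _ => rfl
  have hstep2 : ∀ (qt : N.Q × Fin d) p, M.step (some qt) p
      = some (gM (p.1, p.2.1) qt.1 p.2.2.2.1, qt.2) := fun _ _ => rfl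
  have hacc : ∀ (q : N.Q) (t : Fin d), some (q, t) ∈ M.accept ↔ gD' q t ∈ N.final := by
    intro q t
    constructor
    · rintro ⟨q', t', h1, h2⟩
      rw [Option.some.injEq, Prod.mk.injEq] at h1
      obtain ⟨rfl, rfl⟩ := h1
      exact h2
    · intro h
      exact ⟨q, t, rfl, h⟩
  have foldl_some : ∀ (l : List (Alp × (Γ × (Fin d × Fin d × Fin d)))) (q : N.Q) (t : Fin d),
      l.foldl M.step (some (q, t)) =
        some ((l.map fun p => ((p.1, p.2.1), p.2.2.2.1)).foldl
          (fun q pr => gM pr.1 q pr.2) q, t) := by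
    intro l
    induction l with
    | nil => intro q t; rfl
    | cons p l ih =>
      intro q t
      rw [List.foldl_cons, hstep2 (q, t) p, List.map_cons, List.foldl_cons, ih]
  -- Bernoulli at the end
  have hbern : ∀ q : N.Q, ∑ t : Fin d, (if gD' q t ∈ N.final then (1:ℚ) else 0)
      = (d : ℚ) * ∑ q'' ∈ N.final, N.matD q q'' := by
    intro q
    calc ∑ t : Fin d, (if gD' q t ∈ N.final then (1:ℚ) else 0)
        = ∑ q', ((Finset.univ.filter fun r => gD' q r = q').card : ℚ)
            * (if q' ∈ N.final then 1 else 0) :=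
          sum_comp_count (gD' q) (fun q' => if q' ∈ N.final then (1:ℚ) else 0)
      _ = ∑ q', (if q' ∈ N.final then (d:ℚ) * N.matD q q' else 0) := by
          refine Finset.sum_congr rfl fun q' _ => ?_
          rw [hgD q q', mul_ite, mul_one, mul_zero]
      _ = (d : ℚ) * ∑ q'' ∈ N.final, N.matD q q'' := by
          rw [Finset.sum_ite_mem, Finset.univ_inter, Finset.mul_sum]
  have hv1 : ∀ (σ : Alp × Γ) (q1 : N.Q),
      Matrix.vecMul (Matrix.vecMul (Pi.single N.start 1) N.matC) (N.mat σ) q1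
        = ∑ q0, N.matC N.start q0 * N.mat σ q0 q1 := by
    intro σ q1
    simp [Matrix.vecMul, dotProduct, Pi.single_apply, ite_mul, Finset.sum_ite_eq']
  have haccProb : ∀ w : N.Q → ℚ, ∑ q ∈ N.final, Matrix.vecMul w N.matD q
      = ∑ q', w q' * ∑ q'' ∈ N.final, N.matD q' q'' := by
    intro w
    simp only [Matrix.vecMul, dotProduct]
    rw [Finset.sum_comm]
    exact Finset.sum_congr rfl fun q' _ => by rw [Finset.mul_sum]
  -- the counting lemma
  have count : ∀ (m : ℕ) (a : Alp) (x' : List Alp), x'.length = m →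
      ∀ y : List.Vector Γ (m + 1),
      ∑ r : List.Vector (Fin d × Fin d × Fin d) (m + 1),
          (if (a :: x').zip (y.toList.zip r.toList) ∈ M.accepts then (1:ℚ) else 0)
        = (d : ℚ) ^ (3 * (m + 1)) * N.accProb ((a :: x').zip y.toList) := by
    intro m a x' hx' y
    obtain ⟨yh, yt, rfl⟩ : ∃ yh yt, y = yh ::ᵥ yt := ⟨y.head, y.tail, y.cons_head_tail.symm⟩
    set z : List (Alp × Γ) := x'.zip yt.toList with hzdef
    have hzlen : z.length = m := by
      rw [hzdef, List.length_zip, hx', yt.toList_length, min_self]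
    have hmap : ∀ (c' s' t' : List.Vector (Fin d) m),
        ((x'.zip (yt.toList.zip (c'.toList.zip (s'.toList.zip t'.toList)))).map
          fun p => ((p.1, p.2.1), p.2.2.2.1)) = z.zip s'.toList := by
      intro c' s' t'
      rw [hzdef]
      exact zip5_map _ _ _ _ _ (by simp [hx']) (by simp) (by simp) (by simp)
    have hmem : ∀ (c1 s1 t1 : Fin d) (c' s' t' : List.Vector (Fin d) m),
        ((a :: x').zip ((yh ::ᵥ yt).toList.zip
            ((c1, s1, t1) ::ᵥ ((vzipEquiv (Fin d) (Fin d × Fin d) m)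
              (c', (vzipEquiv (Fin d) (Fin d) m) (s', t')))).toList) ∈ M.accepts)
        ↔ gD' ((z.zip s'.toList).foldl (fun q pr => gM pr.1 q pr.2)
              (gM (a, yh) (gC N.start c1) s1)) t1 ∈ N.final := by
      intro c1 s1 t1 c' s' t'
      rw [DFA.mem_accepts]
      show ((a :: x').zip ((yh ::ᵥ yt).toList.zip
          ((c1, s1, t1) ::ᵥ ((vzipEquiv (Fin d) (Fin d × Fin d) m)
            (c', (vzipEquiv (Fin d) (Fin d) m) (s', t')))).toList)).foldl M.step none
          ∈ M.accept ↔ _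
      simp only [List.Vector.toList_cons, vzipEquiv_toList, List.zip_cons_cons,
        List.foldl_cons, hstep1]
      rw [foldl_some, hacc, hmap]
    -- reindex the sum
    let eT : (List.Vector (Fin d) m × (List.Vector (Fin d) m × List.Vector (Fin d) m))
        ≃ List.Vector (Fin d × Fin d × Fin d) m :=
      (Equiv.prodCongr (Equiv.refl _) (vzipEquiv (Fin d) (Fin d) m)).trans
        (vzipEquiv (Fin d) (Fin d × Fin d) m)
    let eR : ((List.Vector (Fin d) m × (List.Vector (Fin d) m × List.Vector (Fin d) m))
        × (Fin d × Fin d × Fin d)) ≃ List.Vector (Fin d × Fin d × Fin d) (m + 1) :=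
      ((Equiv.prodCongr eT (Equiv.refl _)).trans (Equiv.prodComm _ _)).trans
        (vconsEquiv _ m)
    have heR : ∀ (c' s' t' : List.Vector (Fin d) m) (h : Fin d × Fin d × Fin d),
        eR ((c', (s', t')), h) = h ::ᵥ ((vzipEquiv (Fin d) (Fin d × Fin d) m)
          (c', (vzipEquiv (Fin d) (Fin d) m) (s', t'))) := fun _ _ _ _ => rfl
    refine ((Equiv.sum_comp eR _).symm).trans ?_
    rw [Fintype.sum_prod_type]
    simp only [Fintype.sum_prod_type]
    simp only [heR]
    simp only [hmem]
    -- the inner triple sum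
    have inner : ∀ l : List ((Alp × Γ) × Fin d),
        ∑ c1 : Fin d, ∑ s1 : Fin d, ∑ t1 : Fin d,
            (if gD' (l.foldl (fun q pr => gM pr.1 q pr.2)
                (gM (a, yh) (gC N.start c1) s1)) t1 ∈ N.final then (1:ℚ) else 0)
          = (d:ℚ) ^ 3 * ∑ q1, Matrix.vecMul (Matrix.vecMul (Pi.single N.start 1) N.matC)
              (N.mat (a, yh)) q1
              * ∑ q'' ∈ N.final, N.matD (l.foldl (fun q pr => gM pr.1 q pr.2) q1) q'' := by
      intro l
      simp only [hbern]
      have hs1 : ∀ q0 : N.Q, ∑ s1 : Fin d,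
          (∑ q'' ∈ N.final, N.matD (l.foldl (fun q pr => gM pr.1 q pr.2)
            (gM (a, yh) q0 s1)) q'')
          = ∑ q1, ((d:ℚ) * N.mat (a, yh) q0 q1) *
              ∑ q'' ∈ N.final, N.matD (l.foldl (fun q pr => gM pr.1 q pr.2) q1) q'' := by
        intro q0
        rw [sum_comp_count (gM (a, yh) q0)
          (fun q1 => ∑ q'' ∈ N.final, N.matD (l.foldl (fun q pr => gM pr.1 q pr.2) q1) q'')]
        exact Finset.sum_congr rfl fun q1 _ => by rw [hgM]
      calc ∑ c1 : Fin d, ∑ s1 : Fin d, (d:ℚ) *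
              ∑ q'' ∈ N.final, N.matD (l.foldl (fun q pr => gM pr.1 q pr.2)
                (gM (a, yh) (gC N.start c1) s1)) q''
          = ∑ c1 : Fin d, (d:ℚ) * ∑ q1, ((d:ℚ) * N.mat (a, yh) (gC N.start c1) q1) *
              ∑ q'' ∈ N.final, N.matD (l.foldl (fun q pr => gM pr.1 q pr.2) q1) q'' := by
            refine Finset.sum_congr rfl fun c1 _ => ?_
            rw [← Finset.mul_sum, hs1]
        _ = (d:ℚ) * ∑ c1 : Fin d, ∑ q1, ((d:ℚ) * N.mat (a, yh) (gC N.start c1) q1) *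
              ∑ q'' ∈ N.final, N.matD (l.foldl (fun q pr => gM pr.1 q pr.2) q1) q'' := by
            rw [Finset.mul_sum]
        _ = (d:ℚ) * ∑ q0, ((d:ℚ) * N.matC N.start q0) *
              ∑ q1, ((d:ℚ) * N.mat (a, yh) q0 q1) *
                ∑ q'' ∈ N.final, N.matD (l.foldl (fun q pr => gM pr.1 q pr.2) q1) q'' := by
            congr 1
            rw [sum_comp_count (gC N.start)
              (fun q0 => ∑ q1, ((d:ℚ) * N.mat (a, yh) q0 q1) *
                ∑ q'' ∈ N.final, N.matD (l.foldl (fun q pr => gM pr.1 q pr.2) q1) q'')]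
            exact Finset.sum_congr rfl fun q0 _ => by rw [hgC]
        _ = (d:ℚ) ^ 3 * ∑ q1, Matrix.vecMul (Matrix.vecMul (Pi.single N.start 1) N.matC)
              (N.mat (a, yh)) q1
              * ∑ q'' ∈ N.final, N.matD (l.foldl (fun q pr => gM pr.1 q pr.2) q1) q'' := by
            rw [alg3 (d:ℚ) (fun q0 => N.matC N.start q0) (fun q0 q1 => N.mat (a, yh) q0 q1)
              (fun q1 => ∑ q'' ∈ N.final, N.matD (l.foldl (fun q pr => gM pr.1 q pr.2) q1) q'')]
            congr 1
            exact Finset.sum_congr rfl fun q1 _ => by rw [hv1]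
    simp only [inner]
    simp only [Finset.sum_const, Finset.card_univ, card_vector, Fintype.card_fin,
      nsmul_eq_mul]
    rw [← Finset.mul_sum, ← Finset.mul_sum]
    have hrun := run_lemma' N.mat gM hgM (fun q => ∑ q'' ∈ N.final, N.matD q q'') z m hzlen
      (Matrix.vecMul (Matrix.vecMul (Pi.single N.start 1) N.matC) (N.mat (a, yh)))
    rw [hrun]
    have haccProb2 : N.accProb ((a :: x').zip (yh ::ᵥ yt).toList)
        = ∑ q', (z.foldl (fun w σ => Matrix.vecMul w (N.mat σ))
            (Matrix.vecMul (Matrix.vecMul (Pi.single N.start 1) N.matC) (N.mat (a, yh)))) q'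
            * ∑ q'' ∈ N.final, N.matD q' q'' := by
      have hzip : (a :: x').zip (yh ::ᵥ yt).toList = (a, yh) :: z := by
        rw [List.Vector.toList_cons, List.zip_cons_cons, hzdef]
      rw [hzip]
      show ∑ q ∈ N.final, Matrix.vecMul (((a, yh) :: z).foldl
          (fun v σ => Matrix.vecMul v (N.mat σ))
          (Matrix.vecMul (Pi.single N.start 1) N.matC)) N.matD q = _
      rw [List.foldl_cons]
      exact haccProb _
    rw [haccProb2]
    push_cast
    ring
  -- provide the witnesses
  refine ⟨Γ × (Fin d × Fin d × Fin d), inferInstance, Option (N.Q × Fin d), inferInstance, M,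
    fun n v => D n (v.map Prod.fst) * ((1:ℝ) / (d : ℝ) ^ (3 * n)), fun n => ⟨?_, ?_⟩, ?_⟩
  · exact fun v => mul_nonneg ((hD n).1 _) (by positivity)
  · -- sums to one
    refine ((Equiv.sum_comp (vzipEquiv Γ (Fin d × Fin d × Fin d) n) _).symm).trans ?_
    rw [Fintype.sum_prod_type]
    simp only [vzipEquiv_map_fst]
    simp only [Finset.sum_const, Finset.card_univ, card_vector, nsmul_eq_mul]
    have hc : ∀ y : List.Vector Γ n,
        ((Fintype.card (Fin d × Fin d × Fin d) ^ n : ℕ) : ℝ)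
          * (D n y * ((1:ℝ) / (d:ℝ) ^ (3 * n))) = D n y := by
      intro y
      have hcc : ((Fintype.card (Fin d × Fin d × Fin d) ^ n : ℕ) : ℝ) = (d:ℝ) ^ (3 * n) := by
        simp only [Fintype.card_prod, Fintype.card_fin]
        push_cast
        ring
      rw [hcc]
      have hne : ((d:ℝ)) ^ (3 * n) ≠ 0 := pow_ne_zero _ hd0R
      field_simp
    simp only [hc]
    exact (hD n).2
  · -- the main equation
    intro n hn x hx
    obtain ⟨m, rfl⟩ : ∃ m, n = m + 1 := ⟨n - 1, (Nat.succ_pred_eq_of_pos hn).symm⟩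
    cases x with
    | nil => simp at hx
    | cons a x' =>
      have hx' : x'.length = m := by simpa using hx
      have key : ∀ y : List.Vector Γ (m + 1),
          ∑ r : List.Vector (Fin d × Fin d × Fin d) (m + 1),
            (if (a :: x').zip (y.toList.zip r.toList) ∈ M.accepts then (1:ℝ) else 0)
          = (d:ℝ) ^ (3 * (m + 1)) * (N.accProb ((a :: x').zip y.toList) : ℝ) := by
        intro y
        have hc := count m a x' hx' y
        have hcast : ((∑ r : List.Vector (Fin d × Fin d × Fin d) (m + 1),
            (if (a :: x').zip (y.toList.zip r.toList) ∈ M.accepts then (1:ℚ) else 0) : ℚ) : ℝ)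
            = ∑ r : List.Vector (Fin d × Fin d × Fin d) (m + 1),
            (if (a :: x').zip (y.toList.zip r.toList) ∈ M.accepts then (1:ℝ) else 0) := by
          push_cast [apply_ite (fun q : ℚ => (q : ℝ))]
          rfl
        rw [← hcast, hc]
        push_cast
        ring
      simp only [randAccProb]
      refine ((Equiv.sum_comp (vzipEquiv Γ (Fin d × Fin d × Fin d) (m + 1)) _).symm).trans ?_
      rw [Fintype.sum_prod_type]
      refine Finset.sum_congr rfl fun y _ => ?_
      simp only [vzipEquiv_map_fst, vzipEquiv_toList]
      have hsplit : ∀ r : List.Vector (Fin d × Fin d × Fin d) (m + 1),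
          (if (a :: x').zip (y.toList.zip r.toList) ∈ M.accepts
            then D (m + 1) y * ((1:ℝ) / (d:ℝ) ^ (3 * (m + 1))) else 0)
          = (D (m + 1) y * ((1:ℝ) / (d:ℝ) ^ (3 * (m + 1)))) *
            (if (a :: x').zip (y.toList.zip r.toList) ∈ M.accepts then (1:ℝ) else 0) := by
        intro r; split <;> simp
      refine (Finset.sum_congr rfl fun r _ => hsplit r).trans ?_
      rw [← Finset.mul_sum, key y]
      have hne : ((d:ℝ)) ^ (3 * (m + 1)) ≠ 0 := pow_ne_zero _ hd0R
      field_simp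
end

section
/- The marked palindrome language Pal_# is not in REG/n: for every finite advice alphabet Γ, every advice function h : ℕ → Γ* with |h(n)| = n, and every DFA M over the alphabet {0,1,#} × Γ, it is not the case that for all x ∈ {0,1,#}*: x ∈ Pal_# if and only if M accepts [x//h(|x|)]. -/
open scoped BigOperators

lemma mark_inj : ∀ (a c : List Bool) (b d : List (Option Bool)),
    a.map some ++ none :: b = c.map some ++ none :: d → a = c ∧ b = d := by
  intro a
  induction a with
  | nil =>
    intro c b d h
    cases c with
    | nil => simpa using h
    | cons x c => simp at h
  | cons x a ih =>
    intro c b d h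
    cases c with
    | nil => simp at h
    | cons z c =>
      simp only [List.map_cons, List.cons_append, List.cons.injEq,
        Option.some.injEq] at h
      obtain ⟨hxz, h2⟩ := h
      obtain ⟨h3, h4⟩ := ih c b d h2
      exact ⟨by simp [hxz, h3], h4⟩

theorem stmt10 : ¬ InREGn PalHash := by
  rintro ⟨Γ, _, h, hlen, Q, _, M, hM⟩
  classical
  set m := Fintype.card Q with hm
  set n := 2 * m + 1 with hn
  set y := h n with hy
  have hylen : y.length = n := hlen n
  -- pigeonhole on states after reading the first half plus marker
  have hcard : Fintype.card Q < Fintype.card (List.Vector Bool m) := by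
    rw [card_vector, Fintype.card_bool]
    exact Nat.lt_two_pow_self (n := m)
  set g : List.Vector Bool m → Q := fun w =>
    M.evalFrom M.start ((w.toList.map some ++ [none]).zip (y.take (m + 1))) with hg
  obtain ⟨w, w', hne, heq⟩ := Fintype.exists_ne_map_eq_of_card_lt g hcard
  -- key splitting lemma
  have split : ∀ u v : List Bool, u.length = m → v.length = m →
      ((u.map some ++ none :: v.map some).zip y) =
        ((u.map some ++ [none]).zip (y.take (m + 1))) ++
          ((v.map some).zip (y.drop (m + 1))) := by
    intro u v hu hv
    have hlen1 : (u.map some ++ [none]).length = (y.take (m + 1)).length := by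
      simp [hu, hylen, hn]
      omega
    calc ((u.map some ++ none :: v.map some).zip y)
        = (((u.map some ++ [none]) ++ v.map some).zip (y.take (m + 1) ++ y.drop (m + 1))) := by
          simp
      _ = _ := List.zip_append hlen1
  have hlen' : ∀ u v : List Bool, u.length = m → v.length = m →
      (u.map some ++ none :: v.map some).length = n := by
    intro u v hu hv; simp [hu, hv, hn]; omega
  -- acceptance of u # v in terms of g-like state
  have acc : ∀ (u : List.Vector Bool m) (v : List Bool), v.length = m →
      ((u.toList.map some ++ none :: v.map some) ∈ PalHash ↔
        M.evalFrom (g u) ((v.map some).zip (y.drop (m + 1))) ∈ M.accept) := by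
    intro u v hv
    have hu : u.toList.length = m := u.toList_length
    rw [hM, hlen' _ _ hu hv, ← hy, split _ _ hu hv, DFA.mem_accepts, DFA.eval,
      DFA.evalFrom_of_append]
  -- w # w^R is a palindrome, hence accepted from g w
  have hwr : (w.toList.reverse).length = m := by simp
  have h1 : M.evalFrom (g w) ((w.toList.reverse.map some).zip (y.drop (m + 1))) ∈ M.accept := by
    rw [← acc w w.toList.reverse hwr]
    exact ⟨w.toList, rfl⟩
  -- hence w' # w^R is accepted, so in PalHash
  have h2 : (w'.toList.map some ++ none :: (w.toList.reverse.map some)) ∈ PalHash := by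
    rw [acc w' w.toList.reverse hwr, ← heq]; exact h1
  obtain ⟨v, hv⟩ := h2
  obtain ⟨e1, e2⟩ := mark_inj _ _ _ _ hv
  have e3 : w.toList = v := by
    have := List.map_injective_iff.mpr (fun a b => Option.some_inj.mp) e2
    have := List.reverse_injective this
    exact this
  apply hne
  apply List.Vector.toList_injective
  rw [e3, ← e1]
end
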